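/- arXiv:2001.11060 — 13 statements merged into one kernel-verified Lean document; each statement's English description precedes it below -/
import Mathlib

section
/- Let A be an implicative semilattice, j a nucleus on A, and B a finite subset of A containing ⊤ and closed under ⊓ and ⇨. For b ∈ B define j_B(b) to be the infimum (a finite meet, which lies in B) of the set {x ∈ B | j x = x and b ≤ x} (nonempty since ⊤ belongs to it). Then: (i) b ≤ j_B(b) for all b ∈ B; (ii) j_B(j_B(b)) = j_B(b) for all b ∈ B; (iii) j_B(b ⊓ b') = j_B(b) ⊓ j_B(b') for all b, b' ∈ B; (iv) j b ≤ j_B(b) for all b ∈ B; and (v) if j b ∈ B then j_B(b) = j b. -/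
/- Given a nucleus `j` on an implicative semilattice `A` and a finite subalgebra `B`
(containing `⊤` and closed under `⊓` and `⇨`), the map `j_B` sending `b` to the meet of
`{x ∈ B | j x = x ∧ b ≤ x}` is a nucleus on `B`, dominates `j`, and agrees with `j` on
elements whose `j`-image lies in `B`. -/
open Classical in
theorem nucleus_restricted_to_finite_subalgebra {A : Type*} [SemilatticeInf A] [OrderTop A]
    (himp : A → A → A) (hres : ∀ a b c : A, a ≤ himp b c ↔ a ⊓ b ≤ c)
    (j : A → A) (hj_le : ∀ a : A, a ≤ j a) (hj_idem : ∀ a : A, j (j a) = j a)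
    (hj_inf : ∀ a b : A, j (a ⊓ b) = j a ⊓ j b)
    (B : Finset A) (htop : (⊤ : A) ∈ B)
    (hinf : ∀ x ∈ B, ∀ y ∈ B, x ⊓ y ∈ B)
    (himpB : ∀ x ∈ B, ∀ y ∈ B, himp x y ∈ B)
    (jB : A → A)
    (hjB : ∀ b : A, jB b = (B.filter fun x => j x = x ∧ b ≤ x).inf'
      ⟨⊤, Finset.mem_filter.2 ⟨htop, le_antisymm le_top (hj_le ⊤), le_top⟩⟩ id) :
    (∀ b ∈ B, jB b ∈ B) ∧
    (∀ b ∈ B, b ≤ jB b) ∧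
    (∀ b ∈ B, jB (jB b) = jB b) ∧
    (∀ b ∈ B, ∀ b' ∈ B, jB (b ⊓ b') = jB b ⊓ jB b') ∧
    (∀ b ∈ B, j b ≤ jB b) ∧
    (∀ b ∈ B, j b ∈ B → jB b = j b) := by
  have jmono : ∀ u v : A, u ≤ v → j u ≤ j v := by
    intro u v h
    calc j u = j (u ⊓ v) := by rw [inf_eq_left.2 h]
      _ = j u ⊓ j v := hj_inf u v
      _ ≤ j v := inf_le_right
  -- jB b ≤ any fixed point of j in B above b
  have hmin : ∀ b x : A, x ∈ B → j x = x → b ≤ x → jB b ≤ x := by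
    intro b x hxB hjx hbx
    rw [hjB]
    exact Finset.inf'_le id (Finset.mem_filter.2 ⟨hxB, hjx, hbx⟩)
  -- inflationary (for all b)
  have hble : ∀ b : A, b ≤ jB b := by
    intro b
    rw [hjB]
    exact Finset.le_inf' _ _ fun x hx => (Finset.mem_filter.1 hx).2.2
  -- jB b ∈ B
  have hmem : ∀ b : A, jB b ∈ B := by
    intro b
    rw [hjB]
    exact Finset.inf'_mem {x | x ∈ B} hinf _ _ _ fun x hx => (Finset.mem_filter.1 hx).1
  -- jB b is a fixed point of j
  have hfix : ∀ b : A, j (jB b) = jB b := by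
    intro b
    refine le_antisymm ?_ (hj_le _)
    rw [hjB]
    refine Finset.le_inf' _ _ fun x hx => ?_
    obtain ⟨hxB, hjx, hbx⟩ := Finset.mem_filter.1 hx
    calc j ((B.filter fun x => j x = x ∧ b ≤ x).inf'
          ⟨⊤, Finset.mem_filter.2 ⟨htop, le_antisymm le_top (hj_le ⊤), le_top⟩⟩ id)
        ≤ j x := jmono _ _ (Finset.inf'_le id hx)
      _ = x := hjx
  -- himp b x is fixed if x is
  have hfiximp : ∀ b x : A, j x = x → j (himp b x) = himp b x := by
    intro b x hx
    refine le_antisymm ((hres _ _ _).2 ?_) (hj_le _)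
    calc j (himp b x) ⊓ b ≤ j (himp b x) ⊓ j b := inf_le_inf_left _ (hj_le b)
      _ = j (himp b x ⊓ b) := (hj_inf _ _).symm
      _ ≤ j x := jmono _ _ ((hres _ _ _).1 le_rfl)
      _ = x := hx
  refine ⟨fun b _ => hmem b, fun b _ => hble b, fun b hb => ?_, ?_, ?_, ?_⟩
  · exact le_antisymm (hmin _ _ (hmem b) (hfix b) le_rfl) (hble _)
  · intro b hb b' hb'
    refine le_antisymm ?_ ?_
    · have : j (jB b ⊓ jB b') = jB b ⊓ jB b' := by
        rw [hj_inf, hfix, hfix]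
      exact hmin _ _ (hinf _ (hmem b) _ (hmem b')) this
        (inf_le_inf (hble b) (hble b'))
    · -- jB b ⊓ jB b' ≤ jB (b ⊓ b')
      set x := jB (b ⊓ b') with hx
      have hxB : x ∈ B := hmem _
      have hxfix : j x = x := hfix _
      have hbb' : b ⊓ b' ≤ x := hble _
      have h1 : jB b' ≤ himp b x :=
        hmin _ _ (himpB _ hb _ hxB) (hfiximp _ _ hxfix)
          ((hres _ _ _).2 (by rwa [inf_comm] at hbb'))
      have h2 : jB b ≤ himp (himp b x) x :=
        hmin _ _ (himpB _ (himpB _ hb _ hxB) _ hxB) (hfiximp _ _ hxfix)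
          ((hres _ _ _).2 (by
            rw [inf_comm]
            exact (hres _ _ _).1 le_rfl))
      calc jB b ⊓ jB b' ≤ himp (himp b x) x ⊓ himp b x := inf_le_inf h2 h1
        _ ≤ x := (hres _ _ _).1 le_rfl
  · intro b _
    rw [hjB]
    refine Finset.le_inf' _ _ fun x hx => ?_
    obtain ⟨_, hjx, hbx⟩ := Finset.mem_filter.1 hx
    exact hjx ▸ jmono _ _ hbx
  · intro b hb hjbB
    refine le_antisymm (hmin _ _ hjbB (hj_idem b) (hj_le b)) ?_
    rw [hjB]
    refine Finset.le_inf' _ _ fun x hx => ?_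
    obtain ⟨_, hjx, hbx⟩ := Finset.mem_filter.1 hx
    exact hjx ▸ jmono _ _ hbx
end

section
/- Let A be an implicative semilattice and B a finite subset of A containing ⊤ and closed under ⊓ and ⇨. Define k : A → A by k(a) = the infimum over b ∈ B of (a ⇨ b) ⇨ b (a finite meet; B is nonempty since ⊤ ∈ B). Then: (i) k is a nucleus on A; and (ii) if moreover B is a total subalgebra, i.e. a ⇨ b ∈ B for every a ∈ A and b ∈ B, then B equals the set {a ∈ A | k a = a} of fixpoints of k. -/
/- Given a finite subalgebra `B` of an implicative semilattice `A` (containing `⊤` and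
closed under `⊓` and `⇨`), the map `k a = ⨅ b ∈ B, (a ⇨ b) ⇨ b` is a nucleus on `A`, and
if `B` is a total subalgebra then `B` is exactly the set of fixpoints of `k`. -/
theorem nucleus_induced_by_finite_subalgebra {A : Type*} [SemilatticeInf A] [OrderTop A]
    (himp : A → A → A) (hres : ∀ a b c : A, a ≤ himp b c ↔ a ⊓ b ≤ c)
    (B : Finset A) (htop : (⊤ : A) ∈ B)
    (hinf : ∀ x ∈ B, ∀ y ∈ B, x ⊓ y ∈ B)
    (himpB : ∀ x ∈ B, ∀ y ∈ B, himp x y ∈ B)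
    (k : A → A)
    (hk : ∀ a : A, k a = B.inf' ⟨⊤, htop⟩ (fun b => himp (himp a b) b)) :
    ((∀ a : A, a ≤ k a) ∧ (∀ a : A, k (k a) = k a) ∧
      (∀ a b : A, k (a ⊓ b) = k a ⊓ k b)) ∧
    ((∀ a : A, ∀ b ∈ B, himp a b ∈ B) →
      (↑B : Set A) = {a : A | k a = a}) := by
  have mp : ∀ a b : A, himp a b ⊓ a ≤ b := fun a b => (hres _ _ _).mp le_rfl
  have hanti1 : ∀ a a' b : A, a ≤ a' → himp a' b ≤ himp a b :=
    fun a a' b h => (hres _ _ _).mpr ((inf_le_inf_left _ h).trans (mp a' b))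
  have hkle : ∀ (a : A) {b : A}, b ∈ B → k a ≤ himp (himp a b) b := by
    intro a b hb; rw [hk]; exact Finset.inf'_le _ hb
  have hkge : ∀ (a x : A), (∀ b ∈ B, x ≤ himp (himp a b) b) → x ≤ k a := by
    intro a x h; rw [hk]; exact Finset.le_inf' _ _ h
  have infl : ∀ a : A, a ≤ k a := by
    intro a; apply hkge; intro b hb
    exact (hres _ _ _).mpr (by rw [inf_comm]; exact mp a b)
  have kmp : ∀ a : A, ∀ b ∈ B, k a ⊓ himp a b ≤ b := by
    intro a b hb
    exact (inf_le_inf_right _ (hkle a hb)).trans (mp _ _)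
  have comp : ∀ a x b : A, himp a x ⊓ himp x b ≤ himp a b := by
    intro a x b
    rw [hres]
    have h1 : himp a x ⊓ himp x b ⊓ a ≤ x :=
      le_trans (le_inf (inf_le_left.trans inf_le_left) inf_le_right) (mp a x)
    exact le_trans (le_inf (inf_le_left.trans inf_le_right) h1) (mp x b)
  have L : ∀ a x : A, k a ⊓ himp a x ≤ k x := by
    intro a x; apply hkge; intro b hb
    rw [hres]
    have h1 : k a ⊓ himp a x ⊓ himp x b ≤ k a ⊓ himp a b :=
      le_inf (inf_le_left.trans inf_le_left)
        (le_trans (le_inf (inf_le_left.trans inf_le_right) inf_le_right) (comp a x b))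
    exact h1.trans (kmp a b hb)
  have kmono : ∀ a a' : A, a ≤ a' → k a ≤ k a' := by
    intro a a' h; apply hkge; intro b hb
    exact (hkle a hb).trans (hanti1 _ _ _ (hanti1 _ _ _ h))
  refine ⟨⟨infl, ?_, ?_⟩, ?_⟩
  · -- idempotent
    intro a
    refine le_antisymm ?_ (infl (k a))
    apply hkge; intro b hb
    rw [hres]
    have h1 : himp a b ≤ himp (k a) b := (hres _ _ _).mpr (by rw [inf_comm]; exact kmp a b hb)
    exact (inf_le_inf_left _ h1).trans (kmp (k a) b hb)
  · -- meets
    intro a a'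
    refine le_antisymm (le_inf (kmono _ _ inf_le_left) (kmono _ _ inf_le_right)) ?_
    apply hkge; intro b hb
    rw [hres]
    have curry : himp (a ⊓ a') b ≤ himp a (himp a' b) := by
      rw [hres, hres, inf_assoc]; exact mp _ _
    calc k a ⊓ k a' ⊓ himp (a ⊓ a') b
        ≤ k a' ⊓ (k a ⊓ himp a (himp a' b)) :=
          le_inf (inf_le_left.trans inf_le_right)
            (le_inf (inf_le_left.trans inf_le_left) (inf_le_right.trans curry))
      _ ≤ k a' ⊓ k (himp a' b) := inf_le_inf_left _ (L a (himp a' b))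
      _ ≤ himp (himp a' b) b ⊓ himp (himp (himp a' b) b) b :=
          inf_le_inf (hkle a' hb) (hkle (himp a' b) hb)
      _ ≤ b := by rw [inf_comm]; exact mp _ _
  · -- total subalgebra ⇒ fixpoints
    intro htotal
    ext a
    simp only [Finset.coe_sort_coe, Finset.mem_coe, Set.mem_setOf_eq]
    constructor
    · intro ha
      refine le_antisymm ?_ (infl a)
      have hbb : (⊤ : A) ≤ himp a a := (hres _ _ _).mpr inf_le_right
      have h2 : himp (himp a a) a ≤ a :=
        le_trans (le_inf le_rfl (le_top.trans hbb)) (mp _ _)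
      exact (hkle a ha).trans h2
    · intro ha
      have : k a ∈ B := by
        rw [hk]
        exact Finset.inf'_mem (↑B : Set A) hinf B _ _
          (fun b hb => himpB _ (htotal a b hb) _ hb)
      rwa [ha] at this
end

section
/- Let A be a finite implicative semilattice and j a nucleus on A. If a ∈ A satisfies j a = a and x is a meet-prime component of a, i.e. x is meet-prime, a ≤ x, and x is minimal among the meet-prime elements above a (for every meet-prime m with a ≤ m and m ≤ x one has m = x), then j x = x. -/
/-- In a finite implicative semilattice, if `c ≰ a` then there is a meet-prime `m`
above `a` with `c ≰ m`. -/
theorem exists_infPrime_of_not_le {A : Type*} [SemilatticeInf A] [OrderTop A] [Finite A]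
    (himp : A → A → A) (hres : ∀ a b c : A, a ≤ himp b c ↔ a ⊓ b ≤ c)
    (a c : A) (hca : ¬ c ≤ a) : ∃ m : A, InfPrime m ∧ a ≤ m ∧ ¬ c ≤ m := by
  have hS : ({m : A | a ≤ m ∧ ¬ c ≤ m} : Set A).Finite := Set.toFinite _
  obtain ⟨m, hm, hmax⟩ := Set.Finite.exists_maximalFor id _ hS ⟨a, le_refl a, hca⟩
  simp only [id] at hmax
  obtain ⟨ham, hcm⟩ := hm
  refine ⟨m, ⟨?_, ?_⟩, ham, hcm⟩
  · intro hmax'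
    exact hcm (le_top.trans (hmax' le_top))
  · intro u v huv
    by_contra h
    push_neg at h
    obtain ⟨hu, hv⟩ := h
    -- m₁ = himp u m > m since v ≤ m₁ but v ≰ m
    set m₁ := himp u m with hm₁def
    have hmm₁ : m ≤ m₁ := (hres m u m).2 inf_le_left
    have hvm₁ : v ≤ m₁ := (hres v u m).2 (by rwa [inf_comm])
    have hm₁ne : m₁ ≠ m := fun h => hv (h ▸ hvm₁)
    have hcm₁ : c ≤ m₁ := by
      by_contra hc
      exact hm₁ne (le_antisymm (hmax ⟨ham.trans hmm₁, hc⟩ hmm₁) hmm₁)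
    -- so c ⊓ u ≤ m, hence u ≤ himp c m =: m₂ > m
    have hcum : c ⊓ u ≤ m := (hres c u m).1 hcm₁
    set m₂ := himp c m with hm₂def
    have hmm₂ : m ≤ m₂ := (hres m c m).2 inf_le_left
    have hum₂ : u ≤ m₂ := (hres u c m).2 (by rwa [inf_comm])
    have hm₂ne : m₂ ≠ m := fun h => hu (h ▸ hum₂)
    have hcm₂ : c ≤ m₂ := by
      by_contra hc
      exact hm₂ne (le_antisymm (hmax ⟨ham.trans hmm₂, hc⟩ hmm₂) hmm₂)
    exact hcm ((hres c c m).1 hcm₂ |>.trans' (le_inf le_rfl le_rfl))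

/-- In a finite implicative semilattice with a nucleus `j`, meet-prime components of a
fixpoint of `j` are themselves fixpoints of `j`. -/
theorem meetPrime_component_of_fixpoint_is_fixpoint {A : Type*} [SemilatticeInf A]
    [OrderTop A] [Finite A]
    (himp : A → A → A) (hres : ∀ a b c : A, a ≤ himp b c ↔ a ⊓ b ≤ c)
    (j : A → A) (hj_le : ∀ a : A, a ≤ j a) (hj_idem : ∀ a : A, j (j a) = j a)
    (hj_inf : ∀ a b : A, j (a ⊓ b) = j a ⊓ j b)
    (a x : A) (ha : j a = a)
    (hx_prime : InfPrime x) (hax : a ≤ x)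
    (hx_min : ∀ m : A, InfPrime m → a ≤ m → m ≤ x → m = x) :
    j x = x := by
  classical
  have : Fintype A := Fintype.ofFinite A
  -- d = meet of all primes above a other than x
  set S : Finset A := Finset.univ.filter (fun q => InfPrime q ∧ a ≤ q ∧ q ≠ x) with hSdef
  set d : A := S.inf id with hddef
  have hdS : ∀ q ∈ S, d ≤ q := fun q hq => Finset.inf_le hq
  have had : a ≤ d := Finset.le_inf fun q hq => by
    simp only [hSdef, Finset.mem_filter] at hq; exact hq.2.2.1
  -- a = d ⊓ x
  have hadx : a = d ⊓ x := by
    refine le_antisymm (le_inf had hax) ?_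
    by_contra hc
    obtain ⟨m, hm_prime, ham, hcm⟩ := exists_infPrime_of_not_le himp hres a (d ⊓ x) hc
    apply hcm
    rcases eq_or_ne m x with rfl | hne
    · exact inf_le_right
    · exact inf_le_left.trans (hdS m (by simp [hSdef, hm_prime, ham, hne]))
  -- d ≰ x
  have hdx : ¬ d ≤ x := by
    intro hle
    rw [hddef, hx_prime.finset_inf_le] at hle
    obtain ⟨q, hq, hqx⟩ := hle
    simp only [hSdef, Finset.mem_filter] at hq
    exact hq.2.2.2 (hx_min q hq.2.1 hq.2.2.1 hqx)
  -- j x ⊓ d ≤ a ≤ x, so by primeness j x ≤ x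
  have key : d ⊓ j x ≤ x := by
    calc d ⊓ j x ≤ j d ⊓ j x := inf_le_inf_right _ (hj_le d)
    _ = j (d ⊓ x) := (hj_inf d x).symm
    _ = a := by rw [← hadx, ha]
    _ ≤ x := hax
  rcases hx_prime.2 key with h | h
  · exact absurd h hdx
  · exact le_antisymm h (hj_le x)
end

section
/- Let A be a finite implicative semilattice, j a nucleus on A, a ∈ A, and x a meet-prime element of A. Then j a ≤ x if and only if there exists a meet-prime element y of A with j y = y, a ≤ y, and y ≤ x. -/
/-- In a finite implicative semilattice with a nucleus `j`, for a meet-prime `x` we have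
`j a ≤ x` iff there is a meet-prime fixpoint `y` of `j` with `a ≤ y ≤ x`. -/
theorem j_le_meetPrime_iff {A : Type*} [SemilatticeInf A] [OrderTop A] [Finite A]
    (himp : A → A → A) (hres : ∀ a b c : A, a ≤ himp b c ↔ a ⊓ b ≤ c)
    (j : A → A) (hj_le : ∀ a : A, a ≤ j a) (hj_idem : ∀ a : A, j (j a) = j a)
    (hj_inf : ∀ a b : A, j (a ⊓ b) = j a ⊓ j b)
    (a x : A) (hx : InfPrime x) :
    j a ≤ x ↔ ∃ y : A, InfPrime y ∧ j y = y ∧ a ≤ y ∧ y ≤ x := by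
  have jmono : ∀ {b c : A}, b ≤ c → j b ≤ j c := by
    intro b c h
    have : j (b ⊓ c) = j b := by rw [inf_eq_left.2 h]
    calc j b = j b ⊓ j c := by rw [← hj_inf, this]
    _ ≤ j c := inf_le_right
  constructor
  · intro hja
    obtain ⟨y, hay, hymax⟩ := Finite.exists_le_maximal
      (p := fun b => a ≤ b ∧ j b ≤ x) ⟨le_refl a, hja⟩
    obtain ⟨⟨hay', hjy⟩, hmax⟩ := hymax
    have hjy_eq : j y = y :=
      le_antisymm (hmax ⟨hay'.trans (hj_le y), (hj_idem y).le.trans hjy⟩ (hj_le y)).ge (hj_le y)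
    have hyx : y ≤ x := (hj_le y).trans hjy
    refine ⟨y, ⟨?_, ?_⟩, hjy_eq, hay', hyx⟩
    · intro hy
      exact hx.1 fun b hxb => (hy (hyx.trans hxb)).trans hyx
    · intro b c hbc
      by_cases hb : b ≤ y
      · exact Or.inl hb
      right
      set p := himp c y with hp
      have hbp : b ≤ p := (hres b c y).2 hbc
      have hyp : y ≤ p := (hres y c y).2 inf_le_left
      have hpc : p ⊓ c ≤ y := (hres p c y).1 le_rfl
      have hjp : ¬ j p ≤ x := by
        intro h
        exact hb (hbp.trans (hmax ⟨hay'.trans hyp, h⟩ hyp))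
      set q := himp p y with hq
      have hcq : c ≤ q := (hres c p y).2 (by rw [inf_comm]; exact hpc)
      have hyq : y ≤ q := (hres y p y).2 inf_le_left
      have hqp : q ⊓ p ≤ y := (hres q p y).1 le_rfl
      have : j q ⊓ j p ≤ x := by
        rw [← hj_inf]
        exact (jmono hqp).trans (le_of_eq_of_le hjy_eq hyx)
      rcases hx.2 this with h | h
      · exact hcq.trans (hmax ⟨hay'.trans hyq, h⟩ hyq)
      · exact absurd h hjp
  · rintro ⟨y, hy, hjy, hay, hyx⟩
    exact ((jmono hay).trans_eq hjy).trans hyx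
end

section
/- Representation of finite nuclear implicative semilattices: let A be a finite implicative semilattice with nucleus j. Let P be the set of meet-prime elements of A ordered by x ⊑ y iff y ≤ x (the dual of the induced order), and let S = {x ∈ P | j x = x}. Define α(a) = {x ∈ P | ¬(a ≤ x)}. Then: (i) each α(a) is an upward-closed subset of (P, ⊑); (ii) α is a bijection from A onto the upward-closed subsets of (P, ⊑); (iii) α(⊤) = P and α(a ⊓ b) = α(a) ∩ α(b); (iv) α(a ⇨ b) = {x ∈ P | ∀ y, x ⊑ y → y ∈ α(a) → y ∈ α(b)}; (v) α(j a) = j_S(α(a)), where j_S U = {x ∈ P | ∀ y, x ⊑ y → y ∈ S → y ∈ U}. -/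
section Aux

variable {A : Type*} [SemilatticeInf A] [OrderTop A] [Fintype A]

open Classical in
/-- Join in a finite meet-semilattice with top: the inf of all common upper bounds. -/
private noncomputable def nisSup (a b : A) : A :=
  (Finset.univ.filter fun c => a ≤ c ∧ b ≤ c).inf id

private theorem le_nisSup_left (a b : A) : a ≤ nisSup a b := by
  classical
  exact Finset.le_inf fun c hc => (Finset.mem_filter.1 hc).2.1

private theorem le_nisSup_right (a b : A) : b ≤ nisSup a b := by
  classical
  exact Finset.le_inf fun c hc => (Finset.mem_filter.1 hc).2.2

private theorem nisSup_le {a b c : A} (hac : a ≤ c) (hbc : b ≤ c) : nisSup a b ≤ c := by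
  classical
  exact Finset.inf_le (by simp [hac, hbc])

/-- Distributivity consequence of residuation. -/
private theorem nisSup_inf_nisSup_le (himp : A → A → A)
    (hres : ∀ a b c : A, a ≤ himp b c ↔ a ⊓ b ≤ c) (m u v : A) :
    nisSup m u ⊓ nisSup m v ≤ nisSup m (u ⊓ v) := by
  set t := nisSup m (u ⊓ v) with ht
  have hmt : m ≤ t := le_nisSup_left _ _
  have huvt : u ⊓ v ≤ t := le_nisSup_right _ _
  have hu : nisSup m v ≤ himp u t := by
    refine nisSup_le ((hres _ _ _).2 (le_trans inf_le_left hmt)) ((hres _ _ _).2 ?_)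
    rw [inf_comm]; exact huvt
  have h2 : u ⊓ nisSup m v ≤ t := by
    have := (hres _ _ _).1 hu; rwa [inf_comm] at this
  have hfin : nisSup m u ≤ himp (nisSup m v) t := by
    refine nisSup_le ((hres _ _ _).2 (le_trans inf_le_left hmt)) ((hres _ _ _).2 ?_)
    exact h2
  exact (hres _ _ _).1 hfin

/-- Key lemma: the meet-primes above `b` determine `b`. -/
private theorem nis_primeLe (himp : A → A → A)
    (hres : ∀ a b c : A, a ≤ himp b c ↔ a ⊓ b ≤ c) {a b : A}
    (h : ∀ x : A, InfPrime x → b ≤ x → a ≤ x) : a ≤ b := by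
  by_contra hab
  obtain ⟨m, hm, hmax⟩ := Set.Finite.exists_maximalFor id {c : A | b ≤ c ∧ ¬a ≤ c}
    (Set.toFinite _) ⟨b, le_rfl, hab⟩
  have hmax := fun (y : A) hy hle => le_antisymm hle (hmax (j := y) hy hle)
  have hprime : InfPrime m := by
    constructor
    · intro hmaxm
      have : m = ⊤ := top_le_iff.1 (hmaxm le_top)
      exact hm.2 (this ▸ le_top)
    · intro u v huv
      by_contra hc
      push_neg at hc
      obtain ⟨hu, hv⟩ := hc
      have key : ∀ w, ¬w ≤ m → a ≤ nisSup m w := by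
        intro w hw
        by_contra haw
        have heq := hmax (nisSup m w) ⟨hm.1.trans (le_nisSup_left _ _), haw⟩
          (le_nisSup_left _ _)
        simp only [id] at heq
        exact hw (heq ▸ le_nisSup_right m w)
      have h1 := key u hu
      have h2 := key v hv
      have : a ≤ m :=
        le_trans (le_inf h1 h2) (le_trans (nisSup_inf_nisSup_le himp hres m u v)
          (nisSup_le le_rfl huv))
      exact hm.2 this
  exact hm.2 (h m hprime hm.1)

end Aux

/-- Representation of finite nuclear implicative semilattices: `α a = {x meet-prime | a ≰ x}`
is an isomorphism onto the upward-closed subsets of the set of meet-primes with the dual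
order `x ⊑ y ↔ y ≤ x`, turning `⊓` into `∩`, `⇨` into Heyting implication of upsets, and
`j` into `j_S` where `S` is the set of meet-prime fixpoints of `j`. -/
theorem representation_finite_nis {A : Type*} [SemilatticeInf A] [OrderTop A] [Finite A]
    (himp : A → A → A) (hres : ∀ a b c : A, a ≤ himp b c ↔ a ⊓ b ≤ c)
    (j : A → A) (hj_le : ∀ a : A, a ≤ j a) (hj_idem : ∀ a : A, j (j a) = j a)
    (hj_inf : ∀ a b : A, j (a ⊓ b) = j a ⊓ j b)
    (α : A → Set {x : A // InfPrime x})
    (hα : ∀ a : A, α a = {x : {x : A // InfPrime x} | ¬ a ≤ (x : A)}) :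
    -- (i) each `α a` is upward closed for the order `x ⊑ y ↔ (y : A) ≤ (x : A)`
    (∀ a : A, ∀ x y : {x : A // InfPrime x}, (y : A) ≤ (x : A) → x ∈ α a → y ∈ α a) ∧
    -- (ii) `α` is a bijection onto the upward-closed subsets
    Function.Injective α ∧
    (∀ U : Set {x : A // InfPrime x},
      (∀ x y : {x : A // InfPrime x}, (y : A) ≤ (x : A) → x ∈ U → y ∈ U) →
      ∃ a : A, α a = U) ∧
    -- (iii) `α` sends `⊤` to everything and `⊓` to `∩`
    α (⊤ : A) = Set.univ ∧
    (∀ a b : A, α (a ⊓ b) = α a ∩ α b) ∧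
    -- (iv) `α` sends `⇨` to the Heyting implication of upsets
    (∀ a b : A, α (himp a b) =
      {x : {x : A // InfPrime x} | ∀ y : {x : A // InfPrime x},
        (y : A) ≤ (x : A) → y ∈ α a → y ∈ α b}) ∧
    -- (v) `α` sends `j` to `j_S` for `S` the meet-prime fixpoints of `j`
    (∀ a : A, α (j a) =
      {x : {x : A // InfPrime x} | ∀ y : {x : A // InfPrime x},
        (y : A) ≤ (x : A) → j (y : A) = (y : A) → y ∈ α a}) := by
  classical
  cases nonempty_fintype A
  have hjmono : ∀ a b : A, a ≤ b → j a ≤ j b := by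
    intro a b hab
    have : j a = j a ⊓ j b := by rw [← hj_inf, inf_eq_left.2 hab]
    rw [this]; exact inf_le_right
  -- (i)
  have part1 : ∀ a : A, ∀ x y : {x : A // InfPrime x}, (y : A) ≤ (x : A) →
      x ∈ α a → y ∈ α a := by
    intro a x y hyx hx
    rw [hα] at hx ⊢
    exact fun hay => hx (hay.trans hyx)
  -- order reflecting / preserving
  have hmono : ∀ a b : A, a ≤ b → α a ⊆ α b := by
    intro a b hab x hx
    rw [hα] at hx ⊢
    exact fun hbx => hx (hab.trans hbx)
  have hrefl : ∀ a b : A, α a ⊆ α b → a ≤ b := by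
    intro a b hsub
    refine nis_primeLe himp hres fun x hx hbx => ?_
    by_contra hax
    have h1 : (⟨x, hx⟩ : {x : A // InfPrime x}) ∈ α a := by rw [hα]; exact hax
    have h2 := hsub h1
    rw [hα] at h2
    exact h2 hbx
  -- (ii) injectivity
  have part2 : Function.Injective α := fun a b hab =>
    le_antisymm (hrefl a b hab.le) (hrefl b a hab.ge)
  -- (ii) surjectivity
  have part3 : ∀ U : Set {x : A // InfPrime x},
      (∀ x y : {x : A // InfPrime x}, (y : A) ≤ (x : A) → x ∈ U → y ∈ U) →
      ∃ a : A, α a = U := by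
    intro U hU
    refine ⟨(Finset.univ.filter fun x : {x : A // InfPrime x} => x ∉ U).inf
      (fun x => (x : A)), ?_⟩
    ext x
    rw [hα]
    simp only [Set.mem_setOf_eq]
    constructor
    · intro hx
      by_contra hxU
      exact hx (Finset.inf_le (by simp [hxU]))
    · intro hxU hle
      obtain ⟨y, hy, hyx⟩ := (x.2.finset_inf_le).1 hle
      simp only [Finset.mem_filter] at hy
      exact hy.2 (hU x y hyx hxU)
  -- (iii)
  have part4 : α (⊤ : A) = Set.univ := by
    ext x; rw [hα]
    simp only [Set.mem_setOf_eq, Set.mem_univ, iff_true, top_le_iff]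
    exact x.2.ne_top ∘ Eq.symm ∘ Eq.symm
  have part5 : ∀ a b : A, α (a ⊓ b) = α a ∩ α b := by
    intro a b
    ext x
    rw [hα, hα, hα]
    simp only [Set.mem_setOf_eq, Set.mem_inter_iff, x.2.inf_le]
    tauto
  -- (iv)
  have part6 : ∀ a b : A, α (himp a b) =
      {x : {x : A // InfPrime x} | ∀ y : {x : A // InfPrime x},
        (y : A) ≤ (x : A) → y ∈ α a → y ∈ α b} := by
    intro a b
    set T : Set {x : A // InfPrime x} :=
      {x | ∀ y : {x : A // InfPrime x}, (y : A) ≤ (x : A) → y ∈ α a → y ∈ α b} with hT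
    have hTup : ∀ x y : {x : A // InfPrime x}, (y : A) ≤ (x : A) → x ∈ T → y ∈ T :=
      fun x y hyx hx z hzy hz => hx z (hzy.trans hyx) hz
    obtain ⟨c, hc⟩ := part3 T hTup
    have key : ∀ d : A, α d ⊆ T ↔ d ≤ himp a b := by
      intro d
      have step1 : α d ⊆ T ↔ α d ∩ α a ⊆ α b := by
        constructor
        · rintro h x ⟨hxd, hxa⟩
          exact h hxd x le_rfl hxa
        · intro h x hxd y hyx hya
          exact h ⟨part1 d x y hyx hxd, hya⟩
      rw [step1, ← part5]
      constructor
      · intro h; exact (hres _ _ _).2 (hrefl _ _ h)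
      · intro h; exact hmono _ _ ((hres _ _ _).1 h)
    have h1 : c ≤ himp a b := (key c).1 (hc ▸ Set.Subset.rfl)
    have h2 : himp a b ≤ c := by
      have := (key (himp a b)).2 le_rfl
      rw [← hc] at this
      exact hrefl _ _ this
    rw [le_antisymm h2 h1]
    exact hc
  -- (v)
  have part7 : ∀ a : A, α (j a) =
      {x : {x : A // InfPrime x} | ∀ y : {x : A // InfPrime x},
        (y : A) ≤ (x : A) → j (y : A) = (y : A) → y ∈ α a} := by
    intro a
    ext x
    simp only [Set.mem_setOf_eq]
    constructor
    · intro hx y hyx hjy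
      rw [hα] at hx ⊢
      intro hay
      exact hx (((hjmono _ _ hay).trans_eq hjy).trans hyx)
    · intro hx
      rw [hα]
      intro hjax
      -- find a prime fixpoint y ≤ x with a ≤ y
      obtain ⟨m, hm, hmax⟩ := Set.Finite.exists_maximalFor id
        {z : A | j z = z ∧ a ≤ z ∧ z ≤ (x : A)} (Set.toFinite _)
        ⟨j a, hj_idem a, hj_le a, hjax⟩
      have hmax := fun (y : A) hy hle => le_antisymm hle (hmax (j := y) hy hle)
      obtain ⟨hjm, ham, hmx⟩ := hm
      have hprime : InfPrime m := by
        constructor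
        · intro hmaxm
          have : m = ⊤ := top_le_iff.1 (hmaxm le_top)
          exact x.2.ne_top (top_le_iff.1 (this ▸ hmx))
        · intro u v huv
          by_contra hcon
          push_neg at hcon
          obtain ⟨hu, hv⟩ := hcon
          have hle : j (nisSup m u) ⊓ j (nisSup m v) ≤ (x : A) := by
            rw [← hj_inf]
            refine le_trans (hjmono _ _ (le_trans (nisSup_inf_nisSup_le himp hres m u v)
              (nisSup_le le_rfl huv))) ?_
            rw [hjm]; exact hmx
          have key : ∀ w, ¬w ≤ m → ¬ j (nisSup m w) ≤ (x : A) := by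
            intro w hw hjw
            have hmem : j (nisSup m w) ∈ {z : A | j z = z ∧ a ≤ z ∧ z ≤ (x : A)} :=
              ⟨hj_idem _, ham.trans ((le_nisSup_left m w).trans (hj_le _)), hjw⟩
            have heq := hmax _ hmem ((le_nisSup_left m w).trans (hj_le _))
            simp only [id] at heq
            exact hw (((le_nisSup_right m w).trans (hj_le _)).trans heq.symm.le)
          rcases x.2.2 hle with h | h
          · exact key u hu h
          · exact key v hv h
      have := hx ⟨m, hprime⟩ hmx hjm
      rw [hα] at this
      exact this ham
  exact ⟨part1, part2, part3, part4, part5, part6, part7⟩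
end

section
/- Let X be a poset, S ⊆ X, and x ∈ X. The complement of the principal downset ↓x is an upward-closed set, and j_S((↓x)ᶜ) = (↓x)ᶜ if and only if x ∈ S, where j_S U = {z | ∀ y, z ≤ y → y ∈ S → y ∈ U}. -/
/-- For a poset `X`, `S ⊆ X`, and `x ∈ X`: the complement of the principal downset `↓x`
is upward-closed, and it is a fixpoint of `j_S` iff `x ∈ S`. -/
theorem compl_principal_downset_fixpoint_iff {X : Type*} [PartialOrder X]
    (S : Set X) (x : X) :
    IsUpperSet ({y : X | y ≤ x}ᶜ) ∧
    (({z : X | ∀ y : X, z ≤ y → y ∈ S → y ∈ ({y : X | y ≤ x}ᶜ : Set X)} =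
        ({y : X | y ≤ x}ᶜ : Set X)) ↔ x ∈ S) := by
  constructor
  · intro a b hab ha hb
    exact ha (le_trans hab hb)
  · constructor
    · intro h
      by_contra hxS
      have hx : x ∈ {z : X | ∀ y : X, z ≤ y → y ∈ S → y ∈ ({y : X | y ≤ x}ᶜ : Set X)} := by
        intro y hxy hyS hyx
        exact hxS (le_antisymm hxy hyx ▸ hyS)
      rw [h] at hx
      exact hx (le_refl x)
    · intro hxS
      ext z
      constructor
      · intro hz hzx
        exact hz x hzx hxS (le_refl x)
      · intro hz y hzy hyS hyx
        exact hz (le_trans hzy hyx)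
end

section
/- Let X and Y be finite posets, S ⊆ X, T ⊆ Y, and let f be a Köhler morphism from X to Y with domain D ⊆ X. Then f* commutes with the nuclei, i.e. f*(j_T V) = j_S(f* V) for every upward-closed V ⊆ Y, if and only if for every x ∈ X one has ↑( f(↑x) ∩ T ) = f( ↑(↑x ∩ S) ), where f(A) denotes the image f '' (A ∩ D), ↑A = {z | ∃ a ∈ A, a ≤ z}, and ↑x = {z | x ≤ z}. -/
/-- For a Köhler morphism `f` between finite S-posets `(X,S)` and `(Y,T)` with domain `D`,
the dual map `f*` commutes with the nuclei `j_T` and `j_S` iff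
`↑(f(↑x) ∩ T) = f(↑(↑x ∩ S))` for all `x ∈ X`. -/
theorem fstar_nuclear_iff {X Y : Type*} [PartialOrder X] [PartialOrder Y]
    [Finite X] [Finite Y]
    (S : Set X) (T : Set Y) (D : Set X) (f : X → Y)
    (hmono : ∀ x ∈ D, ∀ x' ∈ D, x < x' → f x < f x')
    (hlift : ∀ x ∈ D, ∀ y : Y, f x < y → ∃ z ∈ D, x < z ∧ f z = y) :
    (∀ V : Set Y, IsUpperSet V →
        {x : X | ∀ z ∈ D, x ≤ z → f z ∈ {v : Y | ∀ w : Y, v ≤ w → w ∈ T → w ∈ V}} =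
        {x : X | ∀ y : X, x ≤ y → y ∈ S →
          y ∈ {x : X | ∀ z ∈ D, x ≤ z → f z ∈ V}}) ↔
      (∀ x : X,
        {w : Y | ∃ v ∈ (f '' ({z : X | x ≤ z} ∩ D)) ∩ T, v ≤ w} =
        f '' ({w : X | ∃ v ∈ {z : X | x ≤ z} ∩ S, v ≤ w} ∩ D)) := by
  -- lift along ≤
  have hlift' : ∀ z ∈ D, ∀ w : Y, f z ≤ w → ∃ z' ∈ D, z ≤ z' ∧ f z' = w := by
    intro z hz w hw
    rcases eq_or_lt_of_le hw with h | h
    · exact ⟨z, hz, le_refl z, h⟩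
    · obtain ⟨z', hz', hlt, he⟩ := hlift z hz w h
      exact ⟨z', hz', hlt.le, he⟩
  set A : X → Set Y :=
    fun x => {w : Y | ∃ v ∈ (f '' ({z : X | x ≤ z} ∩ D)) ∩ T, v ≤ w} with hA
  set B : X → Set Y :=
    fun x => f '' ({w : X | ∃ v ∈ {z : X | x ≤ z} ∩ S, v ≤ w} ∩ D) with hB
  have hAupper : ∀ x, IsUpperSet (A x) := by
    intro x a b hab ⟨v, hv, hva⟩
    exact ⟨v, hv, hva.trans hab⟩
  have hBupper : ∀ x, IsUpperSet (B x) := by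
    intro x a b hab ⟨z, ⟨⟨v, ⟨hxv, hvS⟩, hvz⟩, hzD⟩, hfz⟩
    obtain ⟨z', hz'D, hzz', he⟩ := hlift' z hzD b (hfz ▸ hab)
    exact ⟨z', ⟨⟨v, ⟨hxv, hvS⟩, hvz.trans hzz'⟩, hz'D⟩, he⟩
  -- membership characterizations
  have hL : ∀ (V : Set Y), IsUpperSet V → ∀ x : X,
      (x ∈ {x : X | ∀ z ∈ D, x ≤ z → f z ∈ {v : Y | ∀ w : Y, v ≤ w → w ∈ T → w ∈ V}})
        ↔ A x ⊆ V := by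
    intro V hV x
    constructor
    · rintro hx w ⟨v, ⟨⟨z, ⟨hxz, hzD⟩, hfz⟩, hvT⟩, hvw⟩
      exact hV hvw (hfz ▸ hx z hzD hxz (f z) le_rfl (hfz ▸ hvT))
    · intro hx z hzD hxz w hfzw hwT
      obtain ⟨z', hz'D, hzz', he⟩ := hlift' z hzD w hfzw
      exact hx ⟨w, ⟨⟨z', ⟨hxz.trans hzz', hz'D⟩, he⟩, hwT⟩, le_rfl⟩
  have hR : ∀ (V : Set Y), ∀ x : X,
      (x ∈ {x : X | ∀ y : X, x ≤ y → y ∈ S →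
          y ∈ {x : X | ∀ z ∈ D, x ≤ z → f z ∈ V}}) ↔ B x ⊆ V := by
    intro V x
    constructor
    · rintro hx w ⟨z, ⟨⟨v, ⟨hxv, hvS⟩, hvz⟩, hzD⟩, hfz⟩
      exact hfz ▸ hx v hxv hvS z hzD hvz
    · intro hx y hxy hyS z hzD hyz
      exact hx ⟨z, ⟨⟨y, ⟨hxy, hyS⟩, hyz⟩, hzD⟩, rfl⟩
  constructor
  · intro H x
    have key : ∀ V : Set Y, IsUpperSet V → (A x ⊆ V ↔ B x ⊆ V) := fun V hV =>
      (hL V hV x).symm.trans ((Set.ext_iff.mp (H V hV) x).trans (hR V x))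
    exact Set.Subset.antisymm ((key (B x) (hBupper x)).mpr subset_rfl)
      ((key (A x) (hAupper x)).mp subset_rfl)
  · intro H V hV
    ext x
    have hx : A x = B x := H x
    exact (hL V hV x).trans (hx.symm ▸ (hR V x).symm)
end

section
/- Let X and Y be finite posets, S ⊆ X, T ⊆ Y, and let f be a Köhler morphism from X to Y with domain D ⊆ X. Then the condition '↑( f(↑x) ∩ T ) = f( ↑(↑x ∩ S) ) for all x ∈ X' (with f(A) = f '' (A ∩ D)) holds if and only if both: (1) {x ∈ D | f x ∈ T} = D ∩ S; and (2) whenever s ∈ S, d ∈ D, and s ≤ d, there exist s' ∈ S ∩ D and d' ∈ D with s ≤ s' ≤ d' and f d = f d'. -/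
/-- For a Köhler morphism `f` between finite S-posets `(X,S)` and `(Y,T)` with domain `D`,
the condition `↑(f(↑x) ∩ T) = f(↑(↑x ∩ S))` for all `x ∈ X` holds iff
(1) `f⁻¹(T) = D ∩ S` and (2) whenever `s ∈ S`, `d ∈ D`, `s ≤ d`, there are
`s' ∈ S ∩ D` and `d' ∈ D` with `s ≤ s' ≤ d'` and `f d = f d'`. -/
theorem S_morphism_characterization {X Y : Type*} [PartialOrder X] [PartialOrder Y]
    [Finite X] [Finite Y]
    (S : Set X) (T : Set Y) (D : Set X) (f : X → Y)
    (hmono : ∀ x ∈ D, ∀ x' ∈ D, x < x' → f x < f x')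
    (hlift : ∀ x ∈ D, ∀ y : Y, f x < y → ∃ z ∈ D, x < z ∧ f z = y) :
    (∀ x : X,
        {w : Y | ∃ v ∈ (f '' ({z : X | x ≤ z} ∩ D)) ∩ T, v ≤ w} =
        f '' ({w : X | ∃ v ∈ {z : X | x ≤ z} ∩ S, v ≤ w} ∩ D)) ↔
      ({x : X | x ∈ D ∧ f x ∈ T} = D ∩ S ∧
        ∀ s ∈ S, ∀ d ∈ D, s ≤ d →
          ∃ s' ∈ S ∩ D, ∃ d' ∈ D, s ≤ s' ∧ s' ≤ d' ∧ f d = f d') := by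
  constructor
  · intro hC
    have h1 : {x : X | x ∈ D ∧ f x ∈ T} = D ∩ S := by
      ext x
      constructor
      · rintro ⟨hxD, hxT⟩
        have hmem : f x ∈ {w : Y | ∃ v ∈ (f '' ({z : X | x ≤ z} ∩ D)) ∩ T, v ≤ w} :=
          ⟨f x, ⟨⟨x, ⟨le_refl x, hxD⟩, rfl⟩, hxT⟩, le_refl _⟩
        rw [hC x] at hmem
        obtain ⟨w, ⟨⟨s, ⟨hxs, hsS⟩, hsw⟩, hwD⟩, hfw⟩ := hmem
        have hxw : x ≤ w := le_trans hxs hsw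
        have hxeq : x = w := by
          rcases lt_or_eq_of_le hxw with h | h
          · exact absurd (hfw ▸ hmono x hxD w hwD h) (lt_irrefl _)
          · exact h
        have hsx : s = x := le_antisymm (hxeq ▸ hsw) hxs
        exact ⟨hxD, hsx ▸ hsS⟩
      · rintro ⟨hxD, hxS⟩
        refine ⟨hxD, ?_⟩
        have hmem : f x ∈ f '' ({w : X | ∃ v ∈ {z : X | x ≤ z} ∩ S, v ≤ w} ∩ D) :=
          ⟨x, ⟨⟨x, ⟨le_refl x, hxS⟩, le_refl x⟩, hxD⟩, rfl⟩
        rw [← hC x] at hmem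
        obtain ⟨v, ⟨⟨z, ⟨hxz, hzD⟩, hfz⟩, hvT⟩, hvle⟩ := hmem
        have hxeq : x = z := by
          rcases lt_or_eq_of_le hxz with h | h
          · exact absurd (lt_of_lt_of_le (hmono x hxD z hzD h) (hfz ▸ hvle)) (lt_irrefl _)
          · exact h
        rwa [hxeq, hfz]
    refine ⟨h1, ?_⟩
    intro s hsS d hdD hsd
    have hmem : f d ∈ f '' ({w : X | ∃ v ∈ {z : X | s ≤ z} ∩ S, v ≤ w} ∩ D) :=
      ⟨d, ⟨⟨s, ⟨le_refl s, hsS⟩, hsd⟩, hdD⟩, rfl⟩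
    rw [← hC s] at hmem
    obtain ⟨v, ⟨⟨z, ⟨hsz, hzD⟩, hfz⟩, hvT⟩, hvle⟩ := hmem
    have hzS : z ∈ S := by
      have : z ∈ {x : X | x ∈ D ∧ f x ∈ T} := ⟨hzD, hfz ▸ hvT⟩
      rw [h1] at this; exact this.2
    rcases lt_or_eq_of_le (hfz ▸ hvle : f z ≤ f d) with h | h
    · obtain ⟨d', hd'D, hzd', hfd'⟩ := hlift z hzD (f d) h
      exact ⟨z, ⟨hzS, hzD⟩, d', hd'D, hsz, le_of_lt hzd', hfd'.symm⟩
    · exact ⟨z, ⟨hzS, hzD⟩, z, hzD, hsz, le_refl z, h.symm⟩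
  · rintro ⟨h1, h2⟩ x
    ext w
    constructor
    · rintro ⟨v, ⟨⟨z, ⟨hxz, hzD⟩, hfz⟩, hvT⟩, hvle⟩
      have hzS : z ∈ S := by
        have : z ∈ {x : X | x ∈ D ∧ f x ∈ T} := ⟨hzD, hfz ▸ hvT⟩
        rw [h1] at this; exact this.2
      rcases lt_or_eq_of_le (hfz ▸ hvle : f z ≤ w) with h | h
      · obtain ⟨u, huD, hzu, hfu⟩ := hlift z hzD w h
        exact ⟨u, ⟨⟨z, ⟨hxz, hzS⟩, le_of_lt hzu⟩, huD⟩, hfu⟩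
      · exact ⟨z, ⟨⟨z, ⟨hxz, hzS⟩, le_refl z⟩, hzD⟩, h⟩
    · rintro ⟨u, ⟨⟨s, ⟨hxs, hsS⟩, hsu⟩, huD⟩, hfu⟩
      obtain ⟨s', ⟨hs'S, hs'D⟩, d', hd'D, hss', hs'd', hfeq⟩ := h2 s hsS u huD hsu
      have hfs'T : f s' ∈ T := by
        have : s' ∈ D ∩ S := ⟨hs'D, hs'S⟩
        rw [← h1] at this; exact this.2
      have hle : f s' ≤ f d' := by
        rcases lt_or_eq_of_le hs'd' with h | h
        · exact le_of_lt (hmono s' hs'D d' hd'D h)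
        · exact le_of_eq (by rw [h])
      exact ⟨f s', ⟨⟨s', ⟨le_trans hxs hss', hs'D⟩, rfl⟩, hfs'T⟩, by rw [← hfu, hfeq]; exact hle⟩
end

section
/- Coloring Theorem for nuclear implicative semilattices: let X be a finite poset, S ⊆ X, and U_1, …, U_n upward-closed subsets of X with coloring c(x) = {i | x ∈ U_i}. Then the family of all upward-closed subsets of X is generated by U_1, …, U_n under intersection, the whole set, the Heyting implication U ⇨ V = {x | ∀ y, x ≤ y → y ∈ U → y ∈ V}, and the nucleus j_S U = {x | ∀ y, x ≤ y → y ∈ S → y ∈ U} — i.e. the smallest family of upward-closed sets containing U_1,…,U_n and X and closed under these operations is the family of all upward-closed sets — if and only if: (1) for every x ∈ X, if c(x) = c(∇x) then x ∈ S and ∇x ⊄ S; and (2) for all x, y ∈ X, if ∇x = ∇y, c(x) = c(y), and (x ∈ S ↔ y ∈ S), then x = y. -/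
section Helpers

variable {X : Type*} [PartialOrder X]

/-- Heyting implication of subsets of a poset. -/
def himpSet (V W : Set X) : Set X := {x | ∀ y, x ≤ y → y ∈ V → y ∈ W}

lemma isUpperSet_himpSet (V W : Set X) : IsUpperSet (himpSet V W) :=
  fun _a _b hab ha y hy hyV => ha y (le_trans hab hy) hyV

lemma exists_covBy_between [Finite X] {z v : X} (h : z < v) :
    ∃ y, z ⋖ y ∧ y ≤ v := by
  obtain ⟨y, hy, hmin⟩ := Set.Finite.exists_minimalFor id {w | z < w ∧ w ≤ v}
    (Set.toFinite _) ⟨v, h, le_rfl⟩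
  refine ⟨y, ⟨hy.1, fun c hc1 hc2 => ?_⟩, hy.2⟩
  exact (not_le_of_gt hc2) (hmin ⟨hc1, le_trans (le_of_lt hc2) hy.2⟩ (le_of_lt hc2))

omit [PartialOrder X] in
lemma sInter_mem_of_closed [Finite X] {F : Set (Set X)}
    (huniv : Set.univ ∈ F) (hinter : ∀ V ∈ F, ∀ W ∈ F, V ∩ W ∈ F)
    (G : Set (Set X)) (hG : ∀ P ∈ G, P ∈ F) : ⋂₀ G ∈ F := by
  classical
  have hfin : G.Finite := Set.toFinite G
  have main : ∀ (s : Finset (Set X)), (∀ P ∈ s, P ∈ F) → ⋂₀ (↑s : Set (Set X)) ∈ F := by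
    intro s
    induction s using Finset.induction_on with
    | empty => intro _; simpa using huniv
    | insert _ _ hnot ih =>
      intro hmem
      rename_i a s'
      have hcoe : (↑(insert a s') : Set (Set X)) = insert a (↑s' : Set (Set X)) := by simp
      rw [hcoe, Set.sInter_insert]
      exact hinter a (hmem a (Finset.mem_insert_self a s'))
        (⋂₀ ↑s') (ih fun P hP => hmem P (Finset.mem_insert_of_mem hP))
  have hGc : G = ↑hfin.toFinset := by simp
  rw [hGc]
  exact main _ (fun P hP => hG P (by simpa using hP))

end Helpers

lemma coloring_sufficient {X : Type*} [PartialOrder X] [Finite X]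
    (S : Set X) (n : ℕ) (U : Fin n → Set X) (hU : ∀ i, IsUpperSet (U i))
    (hc1 : ∀ x : X, (∀ i, x ∈ U i ↔ ∀ y, x ⋖ y → y ∈ U i) →
      x ∈ S ∧ ∃ y, x ⋖ y ∧ y ∉ S)
    (hc2 : ∀ x y : X, ({z : X | x ⋖ z} = {z : X | y ⋖ z}) →
      (∀ i, x ∈ U i ↔ y ∈ U i) → (x ∈ S ↔ y ∈ S) → x = y)
    (F : Set (Set X)) (hUF : ∀ i, U i ∈ F) (hunivF : Set.univ ∈ F)
    (hinterF : ∀ V ∈ F, ∀ W ∈ F, V ∩ W ∈ F)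
    (himpF : ∀ V ∈ F, ∀ W ∈ F, himpSet V W ∈ F)
    (hjF : ∀ V ∈ F, himpSet S V ∈ F) :
    ∀ V : Set X, IsUpperSet V → V ∈ F := by
  classical
  set F' : Set (Set X) := {P | P ∈ F ∧ IsUpperSet P} with hF'def
  have hUF' : ∀ i, U i ∈ F' := fun i => ⟨hUF i, hU i⟩
  have hunivF' : Set.univ ∈ F' := ⟨hunivF, isUpperSet_univ⟩
  have hinterF' : ∀ V ∈ F', ∀ W ∈ F', V ∩ W ∈ F' :=
    fun V hV W hW => ⟨hinterF V hV.1 W hW.1, hV.2.inter hW.2⟩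
  have himpF' : ∀ V ∈ F', ∀ W ∈ F', himpSet V W ∈ F' :=
    fun V hV W hW => ⟨himpF V hV.1 W hW.1, isUpperSet_himpSet V W⟩
  have hjF' : ∀ V ∈ F', himpSet S V ∈ F' := fun V hV => ⟨hjF V hV.1, isUpperSet_himpSet S V⟩
  have hsInterF' : ∀ G : Set (Set X), (∀ P ∈ G, P ∈ F') → ⋂₀ G ∈ F' :=
    fun G hG => sInter_mem_of_closed hunivF' hinterF' G hG
  have hD : ∀ q : X, {w | q < w} ∈ F' → {w | q ≤ w} ∈ F' → {w : X | ¬ w ≤ q} ∈ F' := by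
    intro q hq1 hq2
    have heq : himpSet {w | q ≤ w} {w | q < w} = {w : X | ¬ w ≤ q} := by
      ext v
      constructor
      · intro h hvq
        exact lt_irrefl q (h q hvq le_rfl)
      · intro hv y hvy hqy
        rcases eq_or_lt_of_le hqy with rfl | h
        · exact absurd hvy hv
        · exact h
    have hmem := himpF' _ hq2 _ hq1
    rwa [heq] at hmem
  have key : ∀ (N : ℕ) (z : X), ({w | z < w}).ncard < N →
      ({w | z < w} ∈ F' ∧ {w | z ≤ w} ∈ F') := by
    intro N
    induction N with
    | zero => exact fun z hz => absurd hz (Nat.not_lt_zero _)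
    | succ N IH =>
      intro z hz
      have hresD : ∀ q : X, {w | q < w} ⊂ {w | z < w} → {w : X | ¬ w ≤ q} ∈ F' := by
        intro q hq
        have hlt := Set.ncard_lt_ncard hq (Set.toFinite _)
        obtain ⟨ha, hb⟩ := IH q (by omega)
        exact hD q ha hb
      have hcovss : ∀ y : X, z ⋖ y → {w | y < w} ⊂ {w | z < w} := by
        intro y hy
        refine (Set.ssubset_iff_of_subset (fun w hw => lt_trans hy.1 hw)).mpr
          ⟨y, hy.1, lt_irrefl y⟩
      -- Part (a): the strict upper set of z is in F'
      have hUzF : {w | z < w} ∈ F' := by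
        have hAF : ⋂₀ {P | P ∈ F' ∧ {y | z ⋖ y} ⊆ P} ∈ F' := hsInterF' _ (fun P hP => hP.1)
        have hAup : IsUpperSet (⋂₀ {P | P ∈ F' ∧ {y | z ⋖ y} ⊆ P}) := hAF.2
        have haAll : ∀ a ∈ ⋂₀ {P | P ∈ F' ∧ {y | z ⋖ y} ⊆ P},
            ∀ P, P ∈ F' → {y | z ⋖ y} ⊆ P → a ∈ P :=
          fun a ha P hp1 hp2 => (Set.mem_sInter.mp ha) P ⟨hp1, hp2⟩
        have hUzA : {w | z < w} ⊆ ⋂₀ {P | P ∈ F' ∧ {y | z ⋖ y} ⊆ P} := by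
          intro w hw
          apply Set.mem_sInter.mpr
          intro P hP
          obtain ⟨y, hy, hyw⟩ := exists_covBy_between hw
          exact hP.1.2 hyw (hP.2 hy)
        have hAUz : ⋂₀ {P | P ∈ F' ∧ {y | z ⋖ y} ⊆ P} ⊆ {w | z < w} := by
          by_contra hcon
          obtain ⟨a0, ha01, ha02⟩ := Set.not_subset.mp hcon
          obtain ⟨a, ha, hmax⟩ := Set.Finite.exists_maximalFor id
            ((⋂₀ {P | P ∈ F' ∧ {y | z ⋖ y} ⊆ P}) ∩ {w | ¬ z < w})
            (Set.toFinite _) ⟨a0, ha01, ha02⟩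
          simp only [id] at hmax
          have haA := ha.1
          have hanUz : ¬ z < a := ha.2
          have hcovUz : ∀ w, a < w → z < w := by
            intro w hw
            by_contra hzw
            exact (not_le_of_gt hw) (hmax ⟨hAup (le_of_lt hw) haA, hzw⟩ (le_of_lt hw))
          have jtrick : ∀ y' : X, z ⋖ y' → y' ∉ S → a ∈ S → a ≤ y' → False := by
            intro y' hy' hy'S haS hay'
            have hDy' := hresD y' (hcovss y' hy')
            have hP : himpSet S {w : X | ¬ w ≤ y'} ∈ F' := hjF' _ hDy'
            have hNzP : {y | z ⋖ y} ⊆ himpSet S {w : X | ¬ w ≤ y'} := by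
              intro y hy w hyw hwS hwy'
              have hzw : z < w := lt_of_lt_of_le hy.1 hyw
              rcases eq_or_lt_of_le hwy' with rfl | hlt
              · exact hy'S hwS
              · exact hy'.2 hzw hlt
            exact (haAll a haA _ hP hNzP) a le_rfl haS hay'
          by_cases haz : a = z
          · subst haz
            have hca : ∀ i, a ∈ U i ↔ ∀ y, a ⋖ y → y ∈ U i := by
              intro i
              constructor
              · intro h y hy; exact hU i hy.le h
              · intro hall
                exact haAll a haA (U i) (hUF' i) (fun y hy => hall y hy)
            obtain ⟨haS, y', hy', hy'S⟩ := hc1 a hca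
            exact jtrick y' hy' hy'S haS hy'.le
          · have hUa_sub : {w | a < w} ⊆ {w | z < w} := fun w hw => hcovUz w hw
            by_cases hEq : {w | a < w} = {w | z < w}
            · have hmemEq : ∀ w : X, a < w ↔ z < w := fun w => Set.ext_iff.mp hEq w
              have hcov_eq : ∀ y : X, a ⋖ y ↔ z ⋖ y := by
                intro y
                constructor
                · intro hy
                  exact ⟨(hmemEq y).mp hy.1, fun c h1 h2 => hy.2 ((hmemEq c).mpr h1) h2⟩
                · intro hy
                  exact ⟨(hmemEq y).mpr hy.1, fun c h1 h2 => hy.2 ((hmemEq c).mp h1) h2⟩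
              have hca : ∀ i, a ∈ U i ↔ ∀ y, a ⋖ y → y ∈ U i := by
                intro i
                constructor
                · intro h y hy; exact hU i hy.le h
                · intro hall
                  exact haAll a haA (U i) (hUF' i) (fun y hy => hall y ((hcov_eq y).mpr hy))
              obtain ⟨haS, y', hy', hy'S⟩ := hc1 a hca
              exact jtrick y' ((hcov_eq y').mp hy') hy'S haS hy'.le
            · have hss : {w | a < w} ⊂ {w | z < w} :=
                HasSubset.Subset.ssubset_of_ne hUa_sub hEq
              have hDa := hresD a hss
              have hsub : {y | z ⋖ y} ⊆ {w : X | ¬ w ≤ a} := by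
                intro y hy hya
                exact hanUz (lt_of_lt_of_le hy.1 hya)
              exact (haAll a haA _ hDa hsub) le_rfl
        have : {w | z < w} = ⋂₀ {P | P ∈ F' ∧ {y | z ⋖ y} ⊆ P} :=
          Set.Subset.antisymm hUzA hAUz
        rw [this]
        exact hAF
      refine ⟨hUzF, ?_⟩
      -- Part (b): the upper set of z is in F'
      have hBF : ⋂₀ {P | P ∈ F' ∧ z ∈ P} ∈ F' := hsInterF' _ (fun P hP => hP.1)
      have hBup : IsUpperSet (⋂₀ {P | P ∈ F' ∧ z ∈ P}) := hBF.2
      have hbAll : ∀ b ∈ ⋂₀ {P | P ∈ F' ∧ z ∈ P}, ∀ P, P ∈ F' → z ∈ P → b ∈ P :=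
        fun b hb P hp1 hp2 => (Set.mem_sInter.mp hb) P ⟨hp1, hp2⟩
      have hUpB : {w | z ≤ w} ⊆ ⋂₀ {P | P ∈ F' ∧ z ∈ P} :=
        fun w hw => Set.mem_sInter.mpr (fun P hP => hP.1.2 hw hP.2)
      have hBUp : ⋂₀ {P | P ∈ F' ∧ z ∈ P} ⊆ {w | z ≤ w} := by
        by_contra hcon
        obtain ⟨b0, hb01, hb02⟩ := Set.not_subset.mp hcon
        obtain ⟨b, hb, hmax⟩ := Set.Finite.exists_maximalFor id
          ((⋂₀ {P | P ∈ F' ∧ z ∈ P}) ∩ {w | ¬ z ≤ w}) (Set.toFinite _) ⟨b0, hb01, hb02⟩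
        simp only [id] at hmax
        have hbB := hb.1
        have hnzb : ¬ z ≤ b := hb.2
        have hcovUp : ∀ w, b < w → z ≤ w := by
          intro w hw
          by_contra hzw
          exact (not_le_of_gt hw) (hmax ⟨hBup (le_of_lt hw) hbB, hzw⟩ (le_of_lt hw))
        by_cases hbz : b < z
        · -- b is covered by z, and z is its unique cover
          have hbcz : b ⋖ z := ⟨hbz, fun c h1 h2 => absurd (hcovUp c h1) (not_le_of_gt h2)⟩
          have huniq : ∀ y, b ⋖ y → y = z := by
            intro y hy
            have hzy : z ≤ y := hcovUp y hy.1
            rcases eq_or_lt_of_le hzy with h | h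
            · exact h.symm
            · exact absurd h (hy.2 hbz)
          have hca : ∀ i, b ∈ U i ↔ ∀ y, b ⋖ y → y ∈ U i := by
            intro i
            constructor
            · intro h y hy; exact hU i hy.le h
            · intro hall
              exact hbAll b hbB (U i) (hUF' i) (hall z hbcz)
          obtain ⟨hbS, y', hy', hy'S⟩ := hc1 b hca
          have hy'z : y' = z := huniq y' hy'
          rw [hy'z] at hy'S
          have hP : himpSet S {w | z < w} ∈ F' := hjF' _ hUzF
          have hzP : z ∈ himpSet S {w | z < w} := by
            intro w hzw hwS
            rcases eq_or_lt_of_le hzw with rfl | h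
            · exact absurd hwS hy'S
            · exact h
          exact hnzb (le_of_lt ((hbAll b hbB _ hP hzP) b le_rfl hbS))
        · -- b is incomparable with z
          have hUb_sub : {w | b < w} ⊆ {w | z < w} := by
            intro w hw
            rcases eq_or_lt_of_le (hcovUp w hw) with rfl | h
            · exact absurd hw hbz
            · exact h
          by_cases hEq : {w | b < w} = {w | z < w}
          · have hmemEq : ∀ w : X, b < w ↔ z < w := fun w => Set.ext_iff.mp hEq w
            have hcov_eq : ∀ y : X, b ⋖ y ↔ z ⋖ y := by
              intro y
              constructor
              · intro hy
                exact ⟨(hmemEq y).mp hy.1, fun c h1 h2 => hy.2 ((hmemEq c).mpr h1) h2⟩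
              · intro hy
                exact ⟨(hmemEq y).mpr hy.1, fun c h1 h2 => hy.2 ((hmemEq c).mp h1) h2⟩
            by_cases hcol : ∀ i, b ∈ U i ↔ z ∈ U i
            · by_cases hSiff : b ∈ S ↔ z ∈ S
              · have hbz' : b = z :=
                  hc2 b z (Set.ext fun y => hcov_eq y) hcol hSiff
                exact hnzb (hbz' ▸ le_rfl)
              · by_cases hzS : z ∈ S
                · have hbS : b ∉ S := fun hbS => hSiff ⟨fun _ => hzS, fun _ => hbS⟩
                  have hinner : himpSet S {w | z < w} ∈ F' := hjF' _ hUzF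
                  have hP : himpSet (himpSet S {w | z < w}) {w | z < w} ∈ F' :=
                    himpF' _ hinner _ hUzF
                  have hzP : z ∈ himpSet (himpSet S {w | z < w}) {w | z < w} := by
                    intro w hzw hwin
                    rcases eq_or_lt_of_le hzw with rfl | h
                    · exact hwin _ le_rfl hzS
                    · exact h
                  have hbin : b ∈ himpSet S {w | z < w} := by
                    intro w hbw hwS
                    rcases eq_or_lt_of_le hbw with rfl | h
                    · exact absurd hwS hbS
                    · exact hUb_sub h
                  exact hnzb (le_of_lt ((hbAll b hbB _ hP hzP) b le_rfl hbin))
                · have hbS : b ∈ S := by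
                    by_contra hbS
                    exact hSiff ⟨fun h => absurd h hbS, fun h => absurd h hzS⟩
                  have hP : himpSet S {w | z < w} ∈ F' := hjF' _ hUzF
                  have hzP : z ∈ himpSet S {w | z < w} := by
                    intro w hzw hwS
                    rcases eq_or_lt_of_le hzw with rfl | h
                    · exact absurd hwS hzS
                    · exact h
                  exact hnzb (le_of_lt ((hbAll b hbB _ hP hzP) b le_rfl hbS))
            · push_neg at hcol
              obtain ⟨i, hi⟩ := hcol
              have hzb : z ∈ U i → b ∈ U i := fun h => hbAll b hbB (U i) (hUF' i) h
              have hbUi : b ∈ U i := by tauto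
              have hzUi : z ∉ U i := by tauto
              have hP : himpSet (U i) {w | z < w} ∈ F' := himpF' _ (hUF' i) _ hUzF
              have hzP : z ∈ himpSet (U i) {w | z < w} := by
                intro w hzw hwU
                rcases eq_or_lt_of_le hzw with rfl | h
                · exact absurd hwU hzUi
                · exact h
              exact hnzb (le_of_lt ((hbAll b hbB _ hP hzP) b le_rfl hbUi))
          · have hss : {w | b < w} ⊂ {w | z < w} :=
              HasSubset.Subset.ssubset_of_ne hUb_sub hEq
            have hDb := hresD b hss
            exact (hbAll b hbB _ hDb hnzb) le_rfl
      have : {w | z ≤ w} = ⋂₀ {P | P ∈ F' ∧ z ∈ P} := Set.Subset.antisymm hUpB hBUp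
      rw [this]
      exact hBF
  have resAll : ∀ q : X, {w | q < w} ∈ F' ∧ {w | q ≤ w} ∈ F' :=
    fun q => key (({w | q < w}).ncard + 1) q (Nat.lt_succ_self _)
  have hDall : ∀ q : X, {w : X | ¬ w ≤ q} ∈ F' := fun q => hD q (resAll q).1 (resAll q).2
  intro V hV
  have hVeq : V = ⋂₀ ((fun u => {w : X | ¬ w ≤ u}) '' Vᶜ) := by
    ext v
    rw [Set.mem_sInter]
    constructor
    · intro hv P hP
      obtain ⟨u, hu, rfl⟩ := hP
      intro hvu
      exact hu (hV hvu hv)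
    · intro h
      by_contra hv
      exact (h _ ⟨v, hv, rfl⟩) le_rfl
  rw [hVeq]
  exact (hsInterF' _ (fun P hP => by obtain ⟨u, _, rfl⟩ := hP; exact hDall u)).1

/-- Coloring Theorem for nuclear implicative semilattices: the upsets `U 1, …, U n`
generate all upward-closed subsets of a finite poset `X` under intersection, the whole
set, Heyting implication, and the nucleus `j_S`, iff (1) every `x` with `c x = c (∇x)`
satisfies `x ∈ S` and `∇x ⊄ S`, and (2) distinct points are separated by covers, color,
or membership in `S`. -/
theorem coloring_theorem_nis {X : Type*} [PartialOrder X] [Finite X]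
    (S : Set X) (n : ℕ) (U : Fin n → Set X) (hU : ∀ i, IsUpperSet (U i)) :
    (∀ F : Set (Set X), (∀ i, U i ∈ F) → Set.univ ∈ F →
        (∀ V ∈ F, ∀ W ∈ F, V ∩ W ∈ F) →
        (∀ V ∈ F, ∀ W ∈ F, {x : X | ∀ y : X, x ≤ y → y ∈ V → y ∈ W} ∈ F) →
        (∀ V ∈ F, {x : X | ∀ y : X, x ≤ y → y ∈ S → y ∈ V} ∈ F) →
        ∀ V : Set X, IsUpperSet V → V ∈ F) ↔
      ((∀ x : X,
          {i : Fin n | x ∈ U i} = ⋂ y ∈ {y : X | x ⋖ y}, {i : Fin n | y ∈ U i} →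
          x ∈ S ∧ ¬ {y : X | x ⋖ y} ⊆ S) ∧
        (∀ x y : X, {z : X | x ⋖ z} = {z : X | y ⋖ z} →
          {i : Fin n | x ∈ U i} = {i : Fin n | y ∈ U i} →
          (x ∈ S ↔ y ∈ S) → x = y)) := by
  constructor
  · intro hLHS
    constructor
    · -- condition (1)
      intro x hxeq
      have hx : ∀ i, x ∈ U i ↔ ∀ y, x ⋖ y → y ∈ U i := by
        intro i
        have h := Set.ext_iff.mp hxeq i
        simpa [Set.mem_iInter] using h
      by_contra hcon
      push_neg at hcon
      -- hcon : x ∈ S → {y | x ⋖ y} ⊆ S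
      have hmem := hLHS {V : Set X | IsUpperSet V ∧ (x ∈ V ↔ ∀ y, x ⋖ y → y ∈ V)}
        (fun i => ⟨hU i, hx i⟩)
        ⟨isUpperSet_univ, by simp⟩
        (by
          rintro V ⟨hV1, hV2⟩ W ⟨hW1, hW2⟩
          refine ⟨hV1.inter hW1, ?_⟩
          constructor
          · intro h y hy
            exact ⟨hV2.mp h.1 y hy, hW2.mp h.2 y hy⟩
          · intro h
            exact ⟨hV2.mpr (fun y hy => (h y hy).1), hW2.mpr (fun y hy => (h y hy).2)⟩)
        (by
          rintro V ⟨hV1, hV2⟩ W ⟨hW1, hW2⟩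
          refine ⟨isUpperSet_himpSet V W, ?_⟩
          constructor
          · intro h y hy
            exact isUpperSet_himpSet V W hy.le h
          · intro hall w hxw hwV
            rcases eq_or_lt_of_le hxw with heq | hlt
            · have hxV : x ∈ V := heq ▸ hwV
              have hxW : x ∈ W :=
                hW2.mpr (fun y hy => (hall y hy) y le_rfl (hV2.mp hxV y hy))
              exact heq ▸ hxW
            · obtain ⟨c, hc, hcw⟩ := exists_covBy_between hlt
              exact (hall c hc) w hcw hwV)
        (by
          rintro V ⟨hV1, hV2⟩
          refine ⟨isUpperSet_himpSet S V, ?_⟩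
          constructor
          · intro h y hy
            exact isUpperSet_himpSet S V hy.le h
          · intro hall w hxw hwS
            rcases eq_or_lt_of_le hxw with heq | hlt
            · have hxS : x ∈ S := heq ▸ hwS
              have hxV : x ∈ V :=
                hV2.mpr (fun y hy => (hall y hy) y le_rfl (hcon hxS hy))
              exact heq ▸ hxV
            · obtain ⟨c, hc, hcw⟩ := exists_covBy_between hlt
              exact (hall c hc) w hcw hwS)
        {w | x < w} (fun a b hab ha => lt_of_lt_of_le ha hab)
      exact lt_irrefl x (hmem.2.mpr (fun y hy => hy.1))
    · -- condition (2)
      intro x y hcov hcolset hS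
      have hcol : ∀ i, x ∈ U i ↔ y ∈ U i := fun i => Set.ext_iff.mp hcolset i
      have hcovp : ∀ w, x ⋖ w ↔ y ⋖ w := fun w => Set.ext_iff.mp hcov w
      have hF2 := hLHS {V : Set X | IsUpperSet V ∧ (x ∈ V ↔ y ∈ V)}
        (fun i => ⟨hU i, hcol i⟩)
        ⟨isUpperSet_univ, by simp⟩
        (by
          rintro V ⟨hV1, hV2⟩ W ⟨hW1, hW2⟩
          exact ⟨hV1.inter hW1, and_congr hV2 hW2⟩)
        (by
          rintro V ⟨hV1, hV2⟩ W ⟨hW1, hW2⟩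
          refine ⟨isUpperSet_himpSet V W, ?_, ?_⟩
          · intro h w hyw hwV
            rcases eq_or_lt_of_le hyw with heq | hlt
            · have hxW : x ∈ W := h x le_rfl (hV2.mpr (heq ▸ hwV))
              exact heq ▸ (hW2.mp hxW)
            · obtain ⟨c, hc, hcw⟩ := exists_covBy_between hlt
              exact h w (le_trans ((hcovp c).mpr hc).le hcw) hwV
          · intro h w hxw hwV
            rcases eq_or_lt_of_le hxw with heq | hlt
            · have hyW : y ∈ W := h y le_rfl (hV2.mp (heq ▸ hwV))
              exact heq ▸ (hW2.mpr hyW)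
            · obtain ⟨c, hc, hcw⟩ := exists_covBy_between hlt
              exact h w (le_trans ((hcovp c).mp hc).le hcw) hwV)
        (by
          rintro V ⟨hV1, hV2⟩
          refine ⟨isUpperSet_himpSet S V, ?_, ?_⟩
          · intro h w hyw hwS
            rcases eq_or_lt_of_le hyw with heq | hlt
            · have hxV : x ∈ V := h x le_rfl (hS.mpr (heq ▸ hwS))
              exact heq ▸ (hV2.mp hxV)
            · obtain ⟨c, hc, hcw⟩ := exists_covBy_between hlt
              exact h w (le_trans ((hcovp c).mpr hc).le hcw) hwS
          · intro h w hxw hwS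
            rcases eq_or_lt_of_le hxw with heq | hlt
            · have hyV : y ∈ V := h y le_rfl (hS.mp (heq ▸ hwS))
              exact heq ▸ (hV2.mpr hyV)
            · obtain ⟨c, hc, hcw⟩ := exists_covBy_between hlt
              exact h w (le_trans ((hcovp c).mp hc).le hcw) hwS)
      have hx : x ≤ y :=
        (hF2 {w | x ≤ w} (fun a b hab ha => le_trans ha hab)).2.mp le_rfl
      have hy : y ≤ x :=
        (hF2 {w | y ≤ w} (fun a b hab ha => le_trans ha hab)).2.mpr le_rfl
      exact le_antisymm hx hy
  · intro hRHS F hUF huniv hinter himpc hjc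
    obtain ⟨h1', h2'⟩ := hRHS
    have hc1 : ∀ x : X, (∀ i, x ∈ U i ↔ ∀ y, x ⋖ y → y ∈ U i) →
        x ∈ S ∧ ∃ y, x ⋖ y ∧ y ∉ S := by
      intro x hx
      have heq : {i : Fin n | x ∈ U i} = ⋂ y ∈ {y : X | x ⋖ y}, {i : Fin n | y ∈ U i} := by
        ext i
        simpa [Set.mem_iInter] using hx i
      obtain ⟨hxS, hns⟩ := h1' x heq
      obtain ⟨y, hy, hyS⟩ := Set.not_subset.mp hns
      exact ⟨hxS, y, hy, hyS⟩
    have hc2 : ∀ x y : X, ({z : X | x ⋖ z} = {z : X | y ⋖ z}) →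
        (∀ i, x ∈ U i ↔ y ∈ U i) → (x ∈ S ↔ y ∈ S) → x = y := by
      intro x y hcv hcl hs
      exact h2' x y hcv (Set.ext fun i => hcl i) hs
    exact coloring_sufficient S n U hU hc1 hc2 F hUF huniv hinter himpc hjc
end

section
/- Coloring Theorem for bounded nuclear implicative semilattices: let X be a finite poset, S ⊆ X, and U_1, …, U_n upward-closed subsets of X with coloring c(x) = {i | x ∈ U_i}. Then the family of all upward-closed subsets of X is generated by U_1, …, U_n under intersection, the whole set, the empty set, the Heyting implication U ⇨ V = {x | ∀ y, x ≤ y → y ∈ U → y ∈ V}, and the nucleus j_S U = {x | ∀ y, x ≤ y → y ∈ S → y ∈ U}, if and only if: (1) for every non-maximal x ∈ X (i.e. there is y with x < y), if c(x) = c(∇x) then x ∈ S and ∇x ⊄ S; and (2) for all x, y ∈ X, if ∇x = ∇y, c(x) = c(y), and (x ∈ S ↔ y ∈ S), then x = y. -/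
open Set

set_option linter.unusedSectionVars false

namespace ColoringThm

variable {X : Type*} [PartialOrder X] [Finite X]

def him (V W : Set X) : Set X := {t | ∀ u, t ≤ u → u ∈ V → u ∈ W}
def nuc (S V : Set X) : Set X := {t | ∀ u, t ≤ u → u ∈ S → u ∈ V}
def Oset (x : X) : Set X := {t | ¬ t ≤ x}

lemma him_upper (V W : Set X) : IsUpperSet (him V W) :=
  fun _ _ hab ha u hu hV => ha u (hab.trans hu) hV

lemma nuc_upper (S V : Set X) : IsUpperSet (nuc S V) :=
  fun _ _ hab ha u hu hS => ha u (hab.trans hu) hS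

lemma Oset_upper (x : X) : IsUpperSet (Oset x) :=
  fun _ _ hab ha h => ha (hab.trans h)

lemma exists_cov {x y : X} (h : x < y) : ∃ z, x ⋖ z ∧ z ≤ y := by
  obtain ⟨z, hz, hmin⟩ := Set.Finite.exists_minimalFor id {u : X | x < u ∧ u ≤ y}
    (Set.toFinite _) ⟨y, h, le_rfl⟩
  refine ⟨z, ⟨hz.1, fun c hxc hcz => ?_⟩, hz.2⟩
  have hzc : z = c := le_antisymm (hmin ⟨hxc, hcz.le.trans hz.2⟩ hcz.le) hcz.le
  rw [← hzc] at hcz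
  exact lt_irrefl z hcz

structure ClosedF (S : Set X) (n : ℕ) (U : Fin n → Set X) (F : Set (Set X)) : Prop where
  memU : ∀ i, U i ∈ F
  muniv : Set.univ ∈ F
  mempty : (∅ : Set X) ∈ F
  minter : ∀ V ∈ F, ∀ W ∈ F, V ∩ W ∈ F
  mhim : ∀ V ∈ F, ∀ W ∈ F, him V W ∈ F
  mnuc : ∀ V ∈ F, nuc S V ∈ F

variable {S : Set X} {n : ℕ} {U : Fin n → Set X} {F : Set (Set X)}

lemma interF {α : Type*} [Finite α] (hF : ClosedF S n U F) (f : α → Set X) (T : Set α)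
    (h : ∀ a ∈ T, f a ∈ F) : (⋂ a ∈ T, f a) ∈ F := by
  classical
  revert h
  refine Set.Finite.induction_on (motive := fun T _ => (∀ a ∈ T, f a ∈ F) → (⋂ a ∈ T, f a) ∈ F) T (Set.toFinite T) ?_ ?_
  · intro _; simpa using hF.muniv
  · intro a s ha hs ih h
    rw [Set.biInter_insert]
    exact hF.minter _ (h a (Set.mem_insert _ _)) _ (ih fun b hb => h b (Set.mem_insert_of_mem _ hb))

def relF (F : Set (Set X)) (x v : X) : Prop :=
  ∀ V, V ∈ F → IsUpperSet V → x ∈ V → v ∈ V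

section Main

variable (hF : ClosedF S n U F) (hU : ∀ i, IsUpperSet (U i))
variable (h1 : ∀ x : X, (∃ y, x < y) → (∀ i, (∀ z, x ⋖ z → z ∈ U i) → x ∈ U i) →
      x ∈ S ∧ ∃ z, x ⋖ z ∧ z ∉ S)
variable (h2 : ∀ x y : X, (∀ z, x ⋖ z ↔ y ⋖ z) → (∀ i, x ∈ U i ↔ y ∈ U i) →
      (x ∈ S ↔ y ∈ S) → x = y)

include hF hU h1 in
lemma caseC {x v : X} (hrel : relF F x v) (hvx : v ⋖ x) (ha : ∀ z, v ⋖ z → x ≤ z) : False := by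
  have hcovv : ∀ z, v ⋖ z → z = x := by
    intro z hz
    rcases (ha z hz).lt_or_eq with h | h
    · exact absurd h (hz.2 hvx.lt)
    · exact h.symm
  have hv1 := h1 v ⟨x, hvx.lt⟩ (by
    intro i hi
    exact hrel (U i) (hF.memU i) (hU i) (hi x hvx))
  obtain ⟨hvS, z, hz, hzS⟩ := hv1
  have hzx := hcovv z hz
  rw [hzx] at hzS
  -- hzS : x ∉ S, hvS : v ∈ S
  by_cases hxm : ∃ z, x ⋖ z
  · by_cases hcol : ∃ i, (∀ z, x ⋖ z → z ∈ U i) ∧ x ∉ U i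
    · obtain ⟨i, hiT, hix⟩ := hcol
      have hxV : x ∈ nuc S (nuc S (U i)) := by
        intro u hxu huS
        rcases hxu.lt_or_eq with h | h
        · intro u' huu' hu'S
          obtain ⟨z', hz', hz'u'⟩ := exists_cov (h.trans_le huu')
          exact hU i hz'u' (hiT z' hz')
        · rw [← h] at huS; exact absurd huS hzS
      have hvV := hrel _ (hF.mnuc _ (hF.mnuc _ (hF.memU i))) (nuc_upper _ _) hxV
      have hvUi := hvV v le_rfl hvS v le_rfl hvS
      exact hix (hU i hvx.le hvUi)
    · push_neg at hcol
      exact hzS (h1 x (hxm.imp fun z' hz' => hz'.lt) hcol).1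
  · push_neg at hxm
    have hxV : x ∈ nuc S (∅ : Set X) := by
      intro u hxu huS
      rcases hxu.lt_or_eq with h | h
      · obtain ⟨z', hz', _⟩ := exists_cov h
        exact absurd hz' (hxm z')
      · rw [← h] at huS; exact absurd huS hzS
    have hvV := hrel _ (hF.mnuc _ hF.mempty) (nuc_upper _ _) hxV
    exact hvV v le_rfl hvS

include hF hU h1 h2 in
lemma caseMutual {x v : X} (IH : ∀ u, x < u → Oset u ∈ F)
    (hrel : relF F x v) (hrel' : relF F v x) (hxv : ¬ x ≤ v) (hnvx : ¬ v ⋖ x)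
    (ha : ∀ z, v ⋖ z → x ≤ z) : False := by
  have hxe : ∀ z, v ⋖ z → x < z := by
    intro z hz
    rcases (ha z hz).lt_or_eq with h | h
    · exact h
    · rw [← h] at hz; exact absurd hz hnvx
  have hnvltx : ¬ v < x := by
    intro hlt
    obtain ⟨z, hz, hzx⟩ := exists_cov hlt
    have hzeq : z = x := le_antisymm hzx (ha z hz)
    rw [hzeq] at hz
    exact hnvx hz
  have hcov1 : ∀ z, x ⋖ z → v ⋖ z := by
    intro z hz
    have hvz : v ≤ z := by
      by_contra hnle
      have hxO : x ∈ Oset z := hrel' _ (IH z hz.lt) (Oset_upper z) hnle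
      exact hxO hz.le
    have hne : v ≠ z := by rintro rfl; exact hxv hz.le
    obtain ⟨z'', hz'', hz''z⟩ := exists_cov (hvz.lt_of_ne hne)
    have hz''eq : z'' = z := by
      rcases hz''z.lt_or_eq with h | h
      · exact absurd h (hz.2 (hxe z'' hz''))
      · exact h
    rw [← hz''eq]; exact hz''
  have hcov2 : ∀ z, v ⋖ z → x ⋖ z := by
    intro z hz
    obtain ⟨z', hz', hz'z⟩ := exists_cov (hxe z hz)
    have hvz' := hcov1 z' hz'
    have hz'eq : z' = z := by
      rcases hz'z.lt_or_eq with h | h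
      · exact absurd h (hz.2 hvz'.lt)
      · exact h
    rw [← hz'eq]; exact hz'
  have hcc : ∀ i, x ∈ U i ↔ v ∈ U i := fun i =>
    ⟨fun h => hrel _ (hF.memU i) (hU i) h, fun h => hrel' _ (hF.memU i) (hU i) h⟩
  have hSd : ¬ (x ∈ S ↔ v ∈ S) := by
    intro hiff
    have hxveq := h2 x v (fun z => ⟨hcov1 z, hcov2 z⟩) hcc hiff
    exact hxv (le_of_eq hxveq)
  by_cases hxS : x ∈ S
  · have hvS : v ∉ S := fun h => hSd ⟨fun _ => h, fun _ => hxS⟩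
    by_cases hcol : ∃ i, (∀ z, x ⋖ z → z ∈ U i) ∧ x ∉ U i
    · obtain ⟨i, hiT, hix⟩ := hcol
      have hvin : v ∈ nuc S (U i) := by
        intro u hvu huS
        have hne : v ≠ u := by rintro rfl; exact hvS huS
        obtain ⟨z, hz, hzu⟩ := exists_cov (hvu.lt_of_ne hne)
        exact hU i hzu (hiT z (hcov2 z hz))
      have hxZ : x ∈ him (nuc S (U i)) (U i) := by
        intro u hxu hun
        rcases hxu.lt_or_eq with h | h
        · obtain ⟨z, hz, hzu⟩ := exists_cov h
          exact hU i hzu (hiT z hz)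
        · exfalso; rw [← h] at hun; exact hix (hun x le_rfl hxS)
      have hvZ := hrel _ (hF.mhim _ (hF.mnuc _ (hF.memU i)) _ (hF.memU i)) (him_upper _ _) hxZ
      exact hix ((hcc i).mpr (hvZ v le_rfl hvin))
    · push_neg at hcol
      by_cases hxm : ∃ z, x ⋖ z
      · obtain ⟨z, hz⟩ := hxm
        have hv1 := h1 v ⟨z, (hcov1 z hz).lt⟩ (by
          intro i hi
          exact (hcc i).mp (hcol i (fun z' hz' => hi z' (hcov1 z' hz'))))
        exact hvS hv1.1
      · push_neg at hxm
        have hxmax : ∀ u, x ≤ u → u = x := by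
          intro u hu
          rcases hu.lt_or_eq with h | h
          · obtain ⟨z, hz, _⟩ := exists_cov h; exact absurd hz (hxm z)
          · exact h.symm
        have hvmax : ∀ u, v ≤ u → u = v := by
          intro u hu
          rcases hu.lt_or_eq with h | h
          · obtain ⟨z, hz, _⟩ := exists_cov h
            exact absurd (hcov2 z hz) (hxm z)
          · exact h.symm
        have hxZ : x ∈ him (nuc S (∅ : Set X)) (∅ : Set X) := by
          intro u hxu hun
          rw [hxmax u hxu] at hun
          exact absurd (hun x le_rfl hxS) (Set.notMem_empty x)
        have hvn : v ∈ nuc S (∅ : Set X) := by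
          intro u hvu huS
          rw [hvmax u hvu] at huS
          exact absurd huS hvS
        have hvZ := hrel _ (hF.mhim _ (hF.mnuc _ hF.mempty) _ hF.mempty) (him_upper _ _) hxZ
        exact (hvZ v le_rfl hvn)
  · have hvS : v ∈ S := by
      by_contra h
      exact hSd ⟨fun hx' => absurd hx' hxS, fun hv' => absurd hv' h⟩
    by_cases hcol : ∃ i, (∀ z, x ⋖ z → z ∈ U i) ∧ x ∉ U i
    · obtain ⟨i, hiT, hix⟩ := hcol
      have hxZ : x ∈ nuc S (U i) := by
        intro u hxu huS
        rcases hxu.lt_or_eq with h | h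
        · obtain ⟨z, hz, hzu⟩ := exists_cov h
          exact hU i hzu (hiT z hz)
        · rw [← h] at huS; exact absurd huS hxS
      have hvZ := hrel _ (hF.mnuc _ (hF.memU i)) (nuc_upper _ _) hxZ
      exact hix ((hcc i).mpr (hvZ v le_rfl hvS))
    · push_neg at hcol
      by_cases hxm : ∃ z, x ⋖ z
      · exact hxS (h1 x (hxm.imp fun z' hz' => hz'.lt) hcol).1
      · push_neg at hxm
        have hxmax : ∀ u, x ≤ u → u = x := by
          intro u hu
          rcases hu.lt_or_eq with h | h
          · obtain ⟨z, hz, _⟩ := exists_cov h; exact absurd hz (hxm z)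
          · exact h.symm
        have hxZ : x ∈ nuc S (∅ : Set X) := by
          intro u hxu huS
          rw [hxmax u hxu] at huS
          exact absurd huS hxS
        have hvZ := hrel _ (hF.mnuc _ hF.mempty) (nuc_upper _ _) hxZ
        exact hvZ v le_rfl hvS

include hF hU h1 in
lemma caseE {x v : X} (IH : ∀ u, x < u → Oset u ∈ F)
    (hrel : relF F x v) (hxv : ¬ x ≤ v)
    (hsep : ∃ M, M ∈ F ∧ IsUpperSet M ∧ v ∈ M ∧ x ∉ M)
    (hxe : ∀ z, v ⋖ z → x < z) : False := by
  obtain ⟨M, hMF, hMu, hvM, hxM⟩ := hsep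
  by_cases hvm : ∃ z, v ⋖ z
  · by_cases hcol : ∃ i, (∀ z, v ⋖ z → z ∈ U i) ∧ v ∉ U i
    · -- color gap at v
      obtain ⟨i, hiT, hiv⟩ := hcol
      have hPF : M ∩ ⋂ u ∈ {u : X | x < u ∧ u ∉ U i}, Oset u ∈ F :=
        hF.minter _ hMF _ (interF hF _ _ (fun u hu => IH u hu.1))
      have hvP : v ∈ M ∩ ⋂ u ∈ {u : X | x < u ∧ u ∉ U i}, Oset u := by
        refine ⟨hvM, ?_⟩
        simp only [Set.mem_iInter]
        intro u hu hle
        rcases hle.lt_or_eq with h | h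
        · obtain ⟨z, hz, hzu⟩ := exists_cov h
          exact hu.2 (hU i hzu (hiT z hz))
        · subst h; exact hxv hu.1.le
      have hxZ : x ∈ him (M ∩ ⋂ u ∈ {u : X | x < u ∧ u ∉ U i}, Oset u) (U i) := by
        intro t hxt htP
        rcases hxt.lt_or_eq with h | h
        · by_contra htU
          have h2' := htP.2
          simp only [Set.mem_iInter] at h2'
          exact h2' t ⟨h, htU⟩ le_rfl
        · rw [← h] at htP; exact absurd htP.1 hxM
      have hvZ := hrel _ (hF.mhim _ hPF _ (hF.memU i)) (him_upper _ _) hxZ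
      exact hiv (hvZ v le_rfl hvP)
    · -- condition (1) at v
      push_neg at hcol
      obtain ⟨zc, hzc⟩ := hvm
      obtain ⟨hvS, z0, hz0, hz0S⟩ := h1 v ⟨zc, hzc.lt⟩ hcol
      have hPF : M ∩ ⋂ u ∈ {u : X | x < u ∧ u < z0}, Oset u ∈ F :=
        hF.minter _ hMF _ (interF hF _ _ (fun u hu => IH u hu.1))
      have hQF : nuc S (Oset z0) ∈ F := hF.mnuc _ (IH z0 (hxe z0 hz0))
      have hvP : v ∈ M ∩ ⋂ u ∈ {u : X | x < u ∧ u < z0}, Oset u := by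
        refine ⟨hvM, ?_⟩
        simp only [Set.mem_iInter]
        intro u hu hle
        rcases hle.lt_or_eq with h | h
        · exact hz0.2 h hu.2
        · subst h; exact hxv hu.1.le
      have hxZ : x ∈ him (M ∩ ⋂ u ∈ {u : X | x < u ∧ u < z0}, Oset u) (nuc S (Oset z0)) := by
        intro t hxt htP
        rcases hxt.lt_or_eq with h | h
        · intro u htu huS hu0
          have hxu : x < u := h.trans_le htu
          have hne : u ≠ z0 := by rintro rfl; exact hz0S huS
          have h2' := htP.2
          simp only [Set.mem_iInter] at h2'
          exact h2' u ⟨hxu, hu0.lt_of_ne hne⟩ htu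
        · rw [← h] at htP; exact absurd htP.1 hxM
      have hvZ := hrel _ (hF.mhim _ hPF _ hQF) (him_upper _ _) hxZ
      exact (hvZ v le_rfl hvP v le_rfl hvS) hz0.le
  · -- v maximal
    push_neg at hvm
    have hPF : M ∩ ⋂ u ∈ {u : X | x < u}, Oset u ∈ F :=
      hF.minter _ hMF _ (interF hF _ _ (fun u hu => IH u hu))
    have hvP : v ∈ M ∩ ⋂ u ∈ {u : X | x < u}, Oset u := by
      refine ⟨hvM, ?_⟩
      simp only [Set.mem_iInter]
      intro u hu hle
      rcases hle.lt_or_eq with h | h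
      · obtain ⟨z, hz, _⟩ := exists_cov h
        exact absurd hz (hvm z)
      · subst h; exact hxv hu.le
    have hxZ : x ∈ him (M ∩ ⋂ u ∈ {u : X | x < u}, Oset u) (∅ : Set X) := by
      intro t hxt htP
      rcases hxt.lt_or_eq with h | h
      · exfalso
        have h2' := htP.2
        simp only [Set.mem_iInter] at h2'
        exact h2' t h le_rfl
      · rw [← h] at htP; exact absurd htP.1 hxM
    have hvZ := hrel _ (hF.mhim _ hPF _ hF.mempty) (him_upper _ _) hxZ
    exact hvZ v le_rfl hvP

include hF hU h1 h2 in
lemma step1 (x : X) (IH : ∀ u, x < u → Oset u ∈ F) : ∀ v, relF F x v → x ≤ v := by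
  by_contra hcon
  push_neg at hcon
  obtain ⟨v0, hv0rel, hv0le⟩ := hcon
  obtain ⟨v, hv, hvmax⟩ := Set.Finite.exists_maximalFor id {v : X | relF F x v ∧ ¬ x ≤ v}
    (Set.toFinite _) ⟨v0, hv0rel, hv0le⟩
  obtain ⟨hrel, hxv⟩ := hv
  have ha : ∀ z, v ⋖ z → x ≤ z := by
    intro z hz
    by_contra hxz
    by_cases hrz : relF F x z
    · have hveq : v = z := le_antisymm hz.le (hvmax ⟨hrz, hxz⟩ hz.le)
      rw [← hveq] at hz
      exact lt_irrefl v hz.lt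
    · unfold relF at hrz
      push_neg at hrz
      obtain ⟨V, hVF, hVu, hxV, hzV⟩ := hrz
      exact hzV (hVu hz.le (hrel V hVF hVu hxV))
  by_cases hvcx : v ⋖ x
  · exact caseC hF hU h1 hrel hvcx ha
  · by_cases hm : relF F v x
    · exact caseMutual hF hU h1 h2 IH hrel hm hxv hvcx ha
    · have hxe : ∀ z, v ⋖ z → x < z := by
        intro z hz
        rcases (ha z hz).lt_or_eq with h | h
        · exact h
        · rw [← h] at hz; exact absurd hz hvcx
      unfold relF at hm
      push_neg at hm
      obtain ⟨M, hMF, hMu, hvM, hxM⟩ := hm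
      exact caseE hF hU h1 IH hrel hxv ⟨M, hMF, hMu, hvM, hxM⟩ hxe

include hF hU h1 in
lemma step2 (x : X) (IH : ∀ u, x < u → Oset u ∈ F) :
    ∃ Q, Q ∈ F ∧ x ∉ Q ∧ ∀ t, x < t → t ∈ Q := by
  by_cases hxm : ∃ z, x ⋖ z
  · by_cases hcol : ∃ i, (∀ z, x ⋖ z → z ∈ U i) ∧ x ∉ U i
    · obtain ⟨i, hiT, hix⟩ := hcol
      refine ⟨U i, hF.memU i, hix, ?_⟩
      intro t ht
      obtain ⟨z, hz, hzt⟩ := exists_cov ht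
      exact hU i hzt (hiT z hz)
    · push_neg at hcol
      obtain ⟨hxS, z0, hz0, hz0S⟩ := h1 x (hxm.imp fun z' hz' => hz'.lt) hcol
      refine ⟨nuc S (Oset z0), hF.mnuc _ (IH z0 hz0.lt), ?_, ?_⟩
      · intro hQ
        exact (hQ x le_rfl hxS) hz0.le
      · intro t ht u htu huS hu0
        have hxu : x < u := ht.trans_le htu
        have huz0 : u = z0 := by
          rcases hu0.lt_or_eq with h | h
          · exact absurd h (hz0.2 hxu)
          · exact h
        rw [huz0] at huS
        exact hz0S huS
  · push_neg at hxm
    refine ⟨∅, hF.mempty, Set.notMem_empty x, ?_⟩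
    intro t ht
    obtain ⟨z, hz, _⟩ := exists_cov ht
    exact absurd hz (hxm z)

include hF hU h1 h2 in
lemma OsetF : ∀ x : X, Oset x ∈ F := by
  have hwf : WellFounded ((· > ·) : X → X → Prop) := wellFounded_gt
  intro x
  refine hwf.induction (C := fun y => Oset y ∈ F) x ?_
  intro x IH
  have IH' : ∀ u, x < u → Oset u ∈ F := fun u hu => IH u hu
  obtain ⟨Q, hQF, hxQ, hTQ⟩ := step2 hF hU h1 x IH'
  have hExF : (⋂ V ∈ {V : Set X | V ∈ F ∧ IsUpperSet V ∧ x ∈ V}, V) ∈ F :=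
    interF hF id _ (fun V hV => hV.1)
  have hxEx : x ∈ ⋂ V ∈ {V : Set X | V ∈ F ∧ IsUpperSet V ∧ x ∈ V}, V := by
    simp only [Set.mem_iInter]
    exact fun V hV => hV.2.2
  have hmem : ∀ v, v ∈ (⋂ V ∈ {V : Set X | V ∈ F ∧ IsUpperSet V ∧ x ∈ V}, V) → x ≤ v := by
    intro v hv
    apply step1 hF hU h1 h2 x IH'
    intro V hVF hVu hxV
    simp only [Set.mem_iInter] at hv
    exact hv V ⟨hVF, hVu, hxV⟩
  have hOeq : Oset x = him (⋂ V ∈ {V : Set X | V ∈ F ∧ IsUpperSet V ∧ x ∈ V}, V) Q := by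
    ext t
    constructor
    · intro ht u htu huEx
      rcases (hmem u huEx).lt_or_eq with h | h
      · exact hTQ u h
      · exfalso; rw [← h] at htu; exact ht htu
    · intro ht hle
      exact hxQ (ht x hle hxEx)
  rw [hOeq]
  exact hF.mhim _ hExF _ hQF

include hF hU h1 h2 in
lemma all_upsets : ∀ V : Set X, IsUpperSet V → V ∈ F := by
  intro V hV
  have hVeq : V = ⋂ y ∈ Vᶜ, Oset y := by
    ext t
    simp only [Set.mem_iInter]
    constructor
    · intro htV y hy hle
      exact hy (hV hle htV)
    · intro h
      by_contra htV
      exact h t htV le_rfl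
  rw [hVeq]
  exact interF hF _ _ fun y _ => OsetF hF hU h1 h2 y

end Main

end ColoringThm

open ColoringThm

/-- Coloring Theorem for bounded nuclear implicative semilattices: the upsets
`U 1, …, U n` generate all upward-closed subsets of a finite poset `X` under
intersection, the whole set, the empty set, Heyting implication, and the nucleus `j_S`,
iff (1) every non-maximal `x` with `c x = c (∇x)` satisfies `x ∈ S` and `∇x ⊄ S`, and
(2) distinct points are separated by covers, color, or membership in `S`. -/
theorem coloring_theorem_bounded_nis {X : Type*} [PartialOrder X] [Finite X]
    (S : Set X) (n : ℕ) (U : Fin n → Set X) (hU : ∀ i, IsUpperSet (U i)) :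
    (∀ F : Set (Set X), (∀ i, U i ∈ F) → Set.univ ∈ F → (∅ : Set X) ∈ F →
        (∀ V ∈ F, ∀ W ∈ F, V ∩ W ∈ F) →
        (∀ V ∈ F, ∀ W ∈ F, {x : X | ∀ y : X, x ≤ y → y ∈ V → y ∈ W} ∈ F) →
        (∀ V ∈ F, {x : X | ∀ y : X, x ≤ y → y ∈ S → y ∈ V} ∈ F) →
        ∀ V : Set X, IsUpperSet V → V ∈ F) ↔
      ((∀ x : X, (∃ y : X, x < y) →
          {i : Fin n | x ∈ U i} = ⋂ y ∈ {y : X | x ⋖ y}, {i : Fin n | y ∈ U i} →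
          x ∈ S ∧ ¬ {y : X | x ⋖ y} ⊆ S) ∧
        (∀ x y : X, {z : X | x ⋖ z} = {z : X | y ⋖ z} →
          {i : Fin n | x ∈ U i} = {i : Fin n | y ∈ U i} →
          (x ∈ S ↔ y ∈ S) → x = y)) := by
  constructor
  · intro hL
    constructor
    · -- condition (1)
      intro x hx hceq
      by_contra hcon
      have himp1 : x ∈ S → {y : X | x ⋖ y} ⊆ S :=
        fun hxS => not_not.mp (fun hns => hcon ⟨hxS, hns⟩)
      obtain ⟨y, hy⟩ := hx
      obtain ⟨z1, hz1, _⟩ := exists_cov hy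
      have hcUi : ∀ i : Fin n, {y : X | x ⋖ y} ⊆ U i → x ∈ U i := by
        intro i hsub
        have hiR : i ∈ ⋂ y ∈ {y : X | x ⋖ y}, {i : Fin n | y ∈ U i} := by
          simp only [Set.mem_iInter]
          exact fun y' hy' => hsub hy'
        rw [← hceq] at hiR
        exact hiR
      have hT := hL {V | IsUpperSet V ∧ ({y : X | x ⋖ y} ⊆ V → x ∈ V)}
        (fun i => ⟨hU i, hcUi i⟩)
        ⟨isUpperSet_univ, fun _ => Set.mem_univ x⟩
        ⟨isUpperSet_empty, fun hsub => absurd (hsub hz1) (Set.notMem_empty z1)⟩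
        (fun V hV W hW => ⟨hV.1.inter hW.1,
          fun hsub => ⟨hV.2 (fun z hz => (hsub hz).1), hW.2 (fun z hz => (hsub hz).2)⟩⟩)
        (fun V hV W hW => by
          refine ⟨him_upper V W, ?_⟩
          intro hsub u hxu huV
          rcases hxu.lt_or_eq with h | h
          · obtain ⟨z, hz, hzu⟩ := exists_cov h
            exact hsub hz u hzu huV
          · rw [← h] at huV
            have hW2 : x ∈ W := by
              apply hW.2
              intro z hz
              exact hsub hz z le_rfl (hV.1 hz.le huV)
            rw [← h]
            exact hW2)
        (fun V hV => by
          refine ⟨nuc_upper S V, ?_⟩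
          intro hsub u hxu huS
          rcases hxu.lt_or_eq with h | h
          · obtain ⟨z, hz, hzu⟩ := exists_cov h
            exact hsub hz u hzu huS
          · rw [← h] at huS
            have hV2 : x ∈ V := by
              apply hV.2
              intro z hz
              exact hsub hz z le_rfl (himp1 huS hz)
            rw [← h]
            exact hV2)
        {u : X | x < u} (fun a b hab ha => lt_of_lt_of_le ha hab)
      exact lt_irrefl x (hT.2 (fun z hz => hz.lt))
    · -- condition (2)
      intro x y hcovs hccs hS
      by_contra hne
      have hcov : ∀ z, x ⋖ z ↔ y ⋖ z := fun z => Set.ext_iff.mp hcovs z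
      have hcc : ∀ i, x ∈ U i ↔ y ∈ U i := fun i => Set.ext_iff.mp hccs i
      have hgt : ∀ u, x < u ↔ y < u := by
        intro u
        constructor
        · intro h
          obtain ⟨z, hz, hzu⟩ := exists_cov h
          exact lt_of_lt_of_le ((hcov z).mp hz).lt hzu
        · intro h
          obtain ⟨z, hz, hzu⟩ := exists_cov h
          exact lt_of_lt_of_le ((hcov z).mpr hz).lt hzu
      have hxny : ¬ x < y := by
        intro h
        obtain ⟨z, hz, hzy⟩ := exists_cov h
        exact absurd hzy (not_le_of_gt ((hcov z).mp hz).lt)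
      have hT := hL {V | IsUpperSet V ∧ (x ∈ V ↔ y ∈ V)}
        (fun i => ⟨hU i, hcc i⟩)
        ⟨isUpperSet_univ, Iff.rfl⟩
        ⟨isUpperSet_empty, Iff.rfl⟩
        (fun V hV W hW => ⟨hV.1.inter hW.1, by
          constructor
          · intro hm; exact ⟨hV.2.mp hm.1, hW.2.mp hm.2⟩
          · intro hm; exact ⟨hV.2.mpr hm.1, hW.2.mpr hm.2⟩⟩)
        (fun V hV W hW => by
          refine ⟨him_upper V W, ?_⟩
          constructor
          · intro hm u hyu huV
            rcases hyu.lt_or_eq with h | h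
            · exact hm u ((hgt u).mpr h).le huV
            · rw [← h] at huV ⊢
              exact hW.2.mp (hm x le_rfl (hV.2.mpr huV))
          · intro hm u hxu huV
            rcases hxu.lt_or_eq with h | h
            · exact hm u ((hgt u).mp h).le huV
            · rw [← h] at huV ⊢
              exact hW.2.mpr (hm y le_rfl (hV.2.mp huV)))
        (fun V hV => by
          refine ⟨nuc_upper S V, ?_⟩
          constructor
          · intro hm u hyu huS
            rcases hyu.lt_or_eq with h | h
            · exact hm u ((hgt u).mpr h).le huS
            · rw [← h] at huS ⊢
              exact hV.2.mp (hm x le_rfl (hS.mpr huS))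
          · intro hm u hxu huS
            rcases hxu.lt_or_eq with h | h
            · exact hm u ((hgt u).mp h).le huS
            · rw [← h] at huS ⊢
              exact hV.2.mpr (hm y le_rfl (hS.mp huS)))
        {u : X | x ≤ u ∧ u ≠ y}
        (by
          intro a b hab hha
          refine ⟨hha.1.trans hab, ?_⟩
          intro hbe
          have hay : a ≤ y := hbe ▸ hab
          have haby : a < y := hay.lt_of_ne hha.2
          exact hxny (lt_of_le_of_lt hha.1 haby))
      exact (hT.2.mp ⟨le_rfl, hne⟩).2 rfl
  · rintro ⟨h1s, h2s⟩
    intro F hUF huniv hemp hinter hhim hnuc V hV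
    have hF : ClosedF S n U F :=
      ⟨hUF, huniv, hemp, hinter, hhim, hnuc⟩
    have h1' : ∀ x : X, (∃ y, x < y) → (∀ i, (∀ z, x ⋖ z → z ∈ U i) → x ∈ U i) →
        x ∈ S ∧ ∃ z, x ⋖ z ∧ z ∉ S := by
      intro x hx hc
      have hceq : {i : Fin n | x ∈ U i} = ⋂ y ∈ {y : X | x ⋖ y}, {i : Fin n | y ∈ U i} := by
        ext i
        simp only [Set.mem_iInter, Set.mem_setOf_eq]
        exact ⟨fun h y' hy' => hU i hy'.le h, fun h => hc i h⟩
      obtain ⟨hxS, hns⟩ := h1s x hx hceq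
      rw [Set.not_subset] at hns
      obtain ⟨z, hz, hzS⟩ := hns
      exact ⟨hxS, z, hz, hzS⟩
    have h2' : ∀ x y : X, (∀ z, x ⋖ z ↔ y ⋖ z) → (∀ i, x ∈ U i ↔ y ∈ U i) →
        (x ∈ S ↔ y ∈ S) → x = y := by
      intro x y hc hcc hSs
      exact h2s x y (Set.ext fun z => hc z) (Set.ext fun i => hcc i) hSs
    exact all_upsets hF hU h1' h2' V hV
end

section
/- Coloring Theorem for implicative semilattices: let X be a finite poset and U_1, …, U_n upward-closed subsets of X with coloring c(x) = {i | x ∈ U_i}. Then the family of all upward-closed subsets of X is generated by U_1, …, U_n under intersection, the whole set, and the Heyting implication U ⇨ V = {x | ∀ y, x ≤ y → y ∈ U → y ∈ V}, if and only if: (1) for every x ∈ X, c(x) is a proper subset of c(∇x); and (2) for all x, y ∈ X, if ∇x = ∇y and c(x) = c(y), then x = y. -/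
set_option linter.unusedSectionVars false

section ColoringAux

variable {X : Type*} [PartialOrder X] [Finite X]

private lemma exists_covby_le' {u s : X} (h : u < s) : ∃ y, u ⋖ y ∧ y ≤ s := by
  classical
  obtain ⟨t, ht, hmin⟩ := Set.Finite.exists_minimalFor id {t : X | u < t ∧ t ≤ s}
    (Set.toFinite _) ⟨s, h, le_rfl⟩
  refine ⟨t, ⟨ht.1, ?_⟩, ht.2⟩
  intro c huc hct
  have hcmem : c ∈ {t : X | u < t ∧ t ≤ s} := ⟨huc, hct.le.trans ht.2⟩
  have := hmin (j := c) hcmem hct.le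
  exact absurd this (by simpa using hct.not_ge)

private lemma isUpperSet_imp' {V W : Set X} :
    IsUpperSet {x : X | ∀ y : X, x ≤ y → y ∈ V → y ∈ W} :=
  fun _p _q hpq hp y hqy hyV => hp y (hpq.trans hqy) hyV

private lemma sInter_mem' {F : Set (Set X)} (huniv : Set.univ ∈ F)
    (hint : ∀ V ∈ F, ∀ W ∈ F, V ∩ W ∈ F) (T : Set (Set X)) (hTF : T ⊆ F) :
    ⋂₀ T ∈ F := by
  have hfin : T.Finite := Set.toFinite T
  induction T, hfin using Set.Finite.induction_on with
  | empty => simpa using huniv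
  | @insert P T _ _ ih =>
    rw [Set.sInter_insert]
    exact hint _ (hTF (Set.mem_insert _ _)) _
      (ih (fun Q hQ => hTF (Set.mem_insert_of_mem _ hQ)))

private lemma sep_lemma {n : ℕ} {U : Fin n → Set X} (hU : ∀ i, IsUpperSet (U i))
    (h1 : ∀ x : X, {i : Fin n | x ∈ U i} ⊂ ⋂ y ∈ {y : X | x ⋖ y}, {i : Fin n | y ∈ U i})
    (h2 : ∀ x y : X, {z : X | x ⋖ z} = {z : X | y ⋖ z} →
      {i : Fin n | x ∈ U i} = {i : Fin n | y ∈ U i} → x = y)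
    {G : Set (Set X)} (hG0 : ∀ W ∈ G, IsUpperSet W)
    (hGU : ∀ i, U i ∈ G) (hGuniv : Set.univ ∈ G)
    (hGint : ∀ V ∈ G, ∀ W ∈ G, V ∩ W ∈ G)
    (hGimp : ∀ V ∈ G, ∀ W ∈ G, {x : X | ∀ y : X, x ≤ y → y ∈ V → y ∈ W} ∈ G)
    {V : Set X} (hV : IsUpperSet V)
    (IH : ∀ V', IsUpperSet V' → V' ⊂ V → V' ∈ G)
    {m : X} (hm : m ∉ V) (hmax : ∀ u, m < u → u ∈ V) :
    ∃ W, W ∈ G ∧ V ⊆ W ∧ m ∉ W := by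
  classical
  set σ : Set X := ⋂₀ {P | P ∈ G ∧ m ∈ P} with hσdef
  have hσG : σ ∈ G := sInter_mem' hGuniv hGint _ (fun P hP => hP.1)
  have hmσ : m ∈ σ := fun P hP => hP.2
  have hσfwd : ∀ a ∈ σ, ∀ P ∈ G, m ∈ P → a ∈ P := fun a ha P hP hmP => ha P ⟨hP, hmP⟩
  by_cases hVσ : V ⊆ σ
  · by_cases hVC : ∀ a ∈ V, ∀ i : Fin n, (∀ y, m ⋖ y → y ∈ U i) → a ∈ U i
    · -- use the color set C_m
      set T : Set (Set X) := U '' {i | ∀ y, m ⋖ y → y ∈ U i} with hT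
      have hCmG : ⋂₀ T ∈ G := sInter_mem' hGuniv hGint _ (by
        rintro P ⟨i, _, rfl⟩; exact hGU i)
      refine ⟨⋂₀ T, hCmG, ?_, ?_⟩
      · rintro a ha P ⟨i, hi, rfl⟩
        exact hVC a ha i hi
      · intro hmem
        obtain ⟨i, hi1, hi2⟩ := Set.exists_of_ssubset (h1 m)
        have hicov : ∀ y, m ⋖ y → y ∈ U i := by
          intro y hy
          have := Set.mem_iInter₂.mp hi1 y hy
          simpa using this
        exact hi2 (hmem _ ⟨i, hicov, rfl⟩)
    · exfalso
      push_neg at hVC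
      obtain ⟨a, haV, j, hjcov, haj⟩ := hVC
      have haσ : a ∈ σ := hVσ haV
      have hfwd : ∀ P ∈ G, m ∈ P → a ∈ P := hσfwd a haσ
      have hmne : m ≠ a := fun e => hm (e ▸ haV)
      have hback : ∀ P ∈ G, a ∈ P → m ∈ P := by
        intro P hP haP
        by_contra hmP
        have hW0G : {x : X | ∀ y : X, x ≤ y → y ∈ P → y ∈ U j} ∈ G :=
          hGimp _ hP _ (hGU j)
        have hmW0 : m ∈ {x : X | ∀ y : X, x ≤ y → y ∈ P → y ∈ U j} := by
          intro s hms hsP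
          rcases eq_or_lt_of_le hms with rfl | hlt
          · exact absurd hsP hmP
          · obtain ⟨y, hy, hys⟩ := exists_covby_le' hlt
            exact (hU j) hys (hjcov y hy)
        exact haj (hfwd _ hW0G hmW0 a le_rfl haP)
      have hma : ¬ m ≤ a := by
        intro h
        rcases eq_or_lt_of_le h with rfl | hlt
        · exact hm haV
        · obtain ⟨y, hy, hys⟩ := exists_covby_le' hlt
          exact haj ((hU j) hys (hjcov y hy))
      have ham : ¬ a ≤ m := by
        intro h
        rcases eq_or_lt_of_le h with rfl | hlt
        · exact hm haV
        · obtain ⟨k, hk1, hk2⟩ := Set.exists_of_ssubset (h1 a)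
          have hkcov : ∀ y, a ⋖ y → y ∈ U k := by
            intro y hy
            have := Set.mem_iInter₂.mp hk1 y hy
            simpa using this
          obtain ⟨t, ht, htm⟩ := exists_covby_le' hlt
          exact hk2 (hfwd _ (hGU k) ((hU k) htm (hkcov t ht)))
      have hD : ∀ w, w ∈ V → ¬ w ≤ a → {u : X | ¬ u ≤ w} ∈ G := by
        intro w hwV hwa
        have hup1 : IsUpperSet {u : X | w ≤ u} := fun p q hpq hp => le_trans hp hpq
        have hss1 : {u : X | w ≤ u} ⊂ V :=
          ⟨fun u hu => hV hu hwV, fun hcon => hwa (hcon haV)⟩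
        have hup2 : IsUpperSet {u : X | w < u} := fun p q hpq hp => lt_of_lt_of_le hp hpq
        have hss2 : {u : X | w < u} ⊂ V :=
          ⟨fun u hu => hV hu.le hwV, fun hcon => hwa (hcon haV).le⟩
        have hG1 := IH _ hup1 hss1
        have hG2 := IH _ hup2 hss2
        have hkey : {x : X | ∀ y : X, x ≤ y → y ∈ {u : X | w ≤ u} → y ∈ {u : X | w < u}}
            = {u : X | ¬ u ≤ w} := by
          ext t
          simp only [Set.mem_setOf_eq]
          constructor
          · intro h htw
            exact absurd (h w htw le_rfl) (lt_irrefl w)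
          · intro htw s hts hws
            refine lt_of_le_of_ne hws ?_
            rintro rfl
            exact htw hts
        rw [← hkey]
        exact hGimp _ hG1 _ hG2
      have hcovma : ∀ y, m ⋖ y → a ⋖ y := by
        intro y hy
        have hyV : y ∈ V := hmax y hy.lt
        have hya : ¬ y ≤ a := fun h => hma (hy.le.trans h)
        have hDy := hD y hyV hya
        have hay : a ≤ y := by
          by_contra hay
          exact (hback _ hDy hay) hy.le
        have haly : a < y := lt_of_le_of_ne hay (by rintro rfl; exact hma hy.le)
        refine ⟨haly, ?_⟩
        intro w haw hwy
        have hwV : w ∈ V := hV haw.le haV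
        have hwa : ¬ w ≤ a := fun h => absurd (lt_of_lt_of_le haw h) (lt_irrefl a)
        have hDw := hD w hwV hwa
        have hmw : m ≤ w := by
          by_contra hmw
          exact (hfwd _ hDw hmw) haw.le
        rcases eq_or_lt_of_le hmw with rfl | hlt
        · exact ham haw.le
        · exact hy.2 hlt hwy
      have hcovam : ∀ y, a ⋖ y → m ⋖ y := by
        intro y hy
        have hyV : y ∈ V := hV hy.le haV
        have hya : ¬ y ≤ a := fun h => absurd (lt_of_lt_of_le hy.lt h) (lt_irrefl a)
        have hDy := hD y hyV hya
        have hmy : m ≤ y := by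
          by_contra hmy
          exact (hfwd _ hDy hmy) hy.le
        have hmly : m < y := lt_of_le_of_ne hmy (by rintro rfl; exact ham hy.le)
        refine ⟨hmly, ?_⟩
        intro w hmw hwy
        have hwV : w ∈ V := hmax w hmw
        have hwa : ¬ w ≤ a := fun h => hma (hmw.le.trans h)
        have hDw := hD w hwV hwa
        have haw : a ≤ w := by
          by_contra haw
          exact (hback _ hDw haw) hmw.le
        rcases eq_or_lt_of_le haw with rfl | hlt
        · exact hma hmw.le
        · exact hy.2 hlt hwy
      have hceq : {i : Fin n | m ∈ U i} = {i : Fin n | a ∈ U i} := by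
        ext i
        exact ⟨fun h => hfwd _ (hGU i) h, fun h => hback _ (hGU i) h⟩
      have hcov : {z : X | m ⋖ z} = {z : X | a ⋖ z} := by
        ext z
        exact ⟨fun h => hcovma z h, fun h => hcovam z h⟩
      exact hmne (h2 m a hcov hceq)
  · obtain ⟨v, hvV, hvσ⟩ := Set.not_subset.mp hVσ
    have hQup : IsUpperSet (V ∩ σ) := hV.inter (hG0 _ hσG)
    have hQss : V ∩ σ ⊂ V := ⟨Set.inter_subset_left, fun hcon => hvσ (hcon hvV).2⟩
    have hQG := IH _ hQup hQss
    refine ⟨{x : X | ∀ y : X, x ≤ y → y ∈ σ → y ∈ V ∩ σ}, hGimp _ hσG _ hQG, ?_, ?_⟩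
    · intro b hb y hby hyσ
      exact ⟨hV hby hb, hyσ⟩
    · intro hmem
      exact hm (hmem m le_rfl hmσ).1

private lemma backward' {n : ℕ} {U : Fin n → Set X} (hU : ∀ i, IsUpperSet (U i))
    (h1 : ∀ x : X, {i : Fin n | x ∈ U i} ⊂ ⋂ y ∈ {y : X | x ⋖ y}, {i : Fin n | y ∈ U i})
    (h2 : ∀ x y : X, {z : X | x ⋖ z} = {z : X | y ⋖ z} →
      {i : Fin n | x ∈ U i} = {i : Fin n | y ∈ U i} → x = y)
    {G : Set (Set X)} (hG0 : ∀ W ∈ G, IsUpperSet W)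
    (hGU : ∀ i, U i ∈ G) (hGuniv : Set.univ ∈ G)
    (hGint : ∀ V ∈ G, ∀ W ∈ G, V ∩ W ∈ G)
    (hGimp : ∀ V ∈ G, ∀ W ∈ G, {x : X | ∀ y : X, x ≤ y → y ∈ V → y ∈ W} ∈ G) :
    ∀ V : Set X, IsUpperSet V → V ∈ G := by
  classical
  have main : ∀ k : ℕ, ∀ V : Set X, IsUpperSet V → V.ncard < k → V ∈ G := by
    intro k
    induction k with
    | zero => exact fun V _ h => absurd h (Nat.not_lt_zero _)
    | succ k IHk =>
      intro V hV hcard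
      have IH : ∀ V', IsUpperSet V' → V' ⊂ V → V' ∈ G := by
        intro V' hV' hss
        exact IHk V' hV'
          (lt_of_lt_of_le (Set.ncard_lt_ncard hss (Set.toFinite V)) (Nat.lt_succ_iff.mp hcard))
      have hsep : ∀ m : X, m ∉ V → (∀ u, m < u → u ∈ V) → ∃ W, W ∈ G ∧ V ⊆ W ∧ m ∉ W :=
        fun m hm hmaxm => sep_lemma hU h1 h2 hG0 hGU hGuniv hGint hGimp hV IH hm hmaxm
      have hch : ∀ m : X, ∃ W : Set X,
          (m ∉ V ∧ (∀ u, m < u → u ∈ V)) → (W ∈ G ∧ V ⊆ W ∧ m ∉ W) := by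
        intro m
        by_cases hmm : m ∉ V ∧ (∀ u, m < u → u ∈ V)
        · obtain ⟨W, h⟩ := hsep m hmm.1 hmm.2
          exact ⟨W, fun _ => h⟩
        · exact ⟨Set.univ, fun h => absurd h hmm⟩
      choose W hW using hch
      set M : Set X := {m | m ∉ V ∧ ∀ u, m < u → u ∈ V} with hM
      have hVeq : V = ⋂₀ (insert Set.univ (W '' M)) := by
        apply Set.Subset.antisymm
        · intro u hu P hP
          rcases hP with rfl | ⟨mm, hmmM, rfl⟩
          · trivial
          · exact (hW mm hmmM).2.1 hu
        · intro u hu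
          by_contra huV
          obtain ⟨mm, hmmM, humm⟩ : ∃ mm, mm ∈ M ∧ u ≤ mm := by
            obtain ⟨t, ht, hmaxt⟩ := Set.Finite.exists_maximalFor id {w : X | w ∉ V ∧ u ≤ w}
              (Set.toFinite _) ⟨u, huV, le_rfl⟩
            refine ⟨t, ⟨ht.1, ?_⟩, ht.2⟩
            intro v hv
            by_contra hvV
            have hvset : v ∈ {w : X | w ∉ V ∧ u ≤ w} := ⟨hvV, ht.2.trans hv.le⟩
            exact hv.ne (le_antisymm hv.le (hmaxt (j := v) hvset hv.le))
          have huW : u ∈ W mm := hu _ (Set.mem_insert_of_mem _ ⟨mm, hmmM, rfl⟩)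
          have hmmW : mm ∈ W mm := (hG0 _ (hW mm hmmM).1) humm huW
          exact (hW mm hmmM).2.2 hmmW
      rw [hVeq]
      apply sInter_mem' hGuniv hGint
      rintro P hP
      rcases hP with rfl | ⟨mm, hmmM, rfl⟩
      · exact hGuniv
      · exact (hW mm hmmM).1
  intro V hV
  exact main (V.ncard + 1) V hV (Nat.lt_succ_self _)

end ColoringAux

/-- Coloring Theorem for implicative semilattices: the upsets `U 1, …, U n` generate all
upward-closed subsets of a finite poset `X` under intersection, the whole set, and
Heyting implication, iff (1) the color of each `x` is a proper subset of the color of its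
set of covers `∇x`, and (2) distinct points are separated by covers or color. -/
theorem coloring_theorem_is {X : Type*} [PartialOrder X] [Finite X]
    (n : ℕ) (U : Fin n → Set X) (hU : ∀ i, IsUpperSet (U i)) :
    (∀ F : Set (Set X), (∀ i, U i ∈ F) → Set.univ ∈ F →
        (∀ V ∈ F, ∀ W ∈ F, V ∩ W ∈ F) →
        (∀ V ∈ F, ∀ W ∈ F, {x : X | ∀ y : X, x ≤ y → y ∈ V → y ∈ W} ∈ F) →
        ∀ V : Set X, IsUpperSet V → V ∈ F) ↔
      ((∀ x : X,
          {i : Fin n | x ∈ U i} ⊂ ⋂ y ∈ {y : X | x ⋖ y}, {i : Fin n | y ∈ U i}) ∧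
        (∀ x y : X, {z : X | x ⋖ z} = {z : X | y ⋖ z} →
          {i : Fin n | x ∈ U i} = {i : Fin n | y ∈ U i} → x = y)) := by
  constructor
  · intro hL
    constructor
    · -- condition (1)
      intro x
      have hsub : {i : Fin n | x ∈ U i} ⊆ ⋂ y ∈ {y : X | x ⋖ y}, {i : Fin n | y ∈ U i} := by
        intro i hi
        refine Set.mem_iInter₂.mpr ?_
        intro y hy
        exact (hU i) hy.le hi
      refine hsub.ssubset_of_ne ?_
      intro heq
      set F1 : Set (Set X) := {W | IsUpperSet W ∧ ((∀ y, x ⋖ y → y ∈ W) → x ∈ W)} with hF1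
      have hUi : ∀ i, U i ∈ F1 := by
        intro i
        refine ⟨hU i, fun hcov => ?_⟩
        have hmem : i ∈ ⋂ y ∈ {y : X | x ⋖ y}, {i : Fin n | y ∈ U i} :=
          Set.mem_iInter₂.mpr (fun y hy => hcov y hy)
        rw [← heq] at hmem
        exact hmem
      have huniv : Set.univ ∈ F1 := ⟨isUpperSet_univ, fun _ => trivial⟩
      have hint : ∀ P ∈ F1, ∀ Q ∈ F1, P ∩ Q ∈ F1 := by
        intro P hP Q hQ
        exact ⟨hP.1.inter hQ.1,
          fun hcov => ⟨hP.2 (fun y hy => (hcov y hy).1), hQ.2 (fun y hy => (hcov y hy).2)⟩⟩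
      have himp : ∀ P ∈ F1, ∀ Q ∈ F1, {z : X | ∀ y : X, z ≤ y → y ∈ P → y ∈ Q} ∈ F1 := by
        intro P hP Q hQ
        refine ⟨isUpperSet_imp', ?_⟩
        intro hcov s hxs hsP
        rcases eq_or_lt_of_le hxs with rfl | hlt
        · refine hQ.2 ?_
          intro y hy
          exact hcov y hy y le_rfl (hP.1 hy.le hsP)
        · obtain ⟨y, hy, hys⟩ := exists_covby_le' hlt
          exact hcov y hy s hys hsP
      have hx := hL F1 hUi huniv hint himp {z : X | x < z}
        (fun p q hpq hp => lt_of_lt_of_le hp hpq)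
      exact absurd (hx.2 (fun y hy => hy.lt)) (lt_irrefl x)
    · -- condition (2)
      intro x y hcovxy hcxy
      set F2 : Set (Set X) := {W | IsUpperSet W ∧ (x ∈ W ↔ y ∈ W)} with hF2
      have hUi : ∀ i, U i ∈ F2 := fun i => ⟨hU i, Set.ext_iff.mp hcxy i⟩
      have huniv : Set.univ ∈ F2 := ⟨isUpperSet_univ, Iff.rfl⟩
      have hint : ∀ P ∈ F2, ∀ Q ∈ F2, P ∩ Q ∈ F2 := by
        intro P hP Q hQ
        exact ⟨hP.1.inter hQ.1, and_congr hP.2 hQ.2⟩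
      have himp : ∀ P ∈ F2, ∀ Q ∈ F2, {z : X | ∀ w : X, z ≤ w → w ∈ P → w ∈ Q} ∈ F2 := by
        intro P hP Q hQ
        refine ⟨isUpperSet_imp', ?_⟩
        have key : ∀ a b : X, {z : X | a ⋖ z} = {z : X | b ⋖ z} → (a ∈ P ↔ b ∈ P) →
            (a ∈ Q ↔ b ∈ Q) → a ∈ {z : X | ∀ w : X, z ≤ w → w ∈ P → w ∈ Q} →
            b ∈ {z : X | ∀ w : X, z ≤ w → w ∈ P → w ∈ Q} := by
          intro a b hab hPab hQab ha s hbs hsP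
          rcases eq_or_lt_of_le hbs with rfl | hlt
          · exact hQab.mp (ha a le_rfl (hPab.mpr hsP))
          · obtain ⟨t, hbt, hts⟩ := exists_covby_le' hlt
            have hat : a ⋖ t := (Set.ext_iff.mp hab t).mpr hbt
            exact ha s (hat.le.trans hts) hsP
        exact ⟨key x y hcovxy hP.2 hQ.2, key y x hcovxy.symm hP.2.symm hQ.2.symm⟩
      have hxy := (hL F2 hUi huniv hint himp {z : X | x ≤ z}
        (fun p q hpq hp => hp.trans hpq)).2
      have hyx := (hL F2 hUi huniv hint himp {z : X | y ≤ z}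
        (fun p q hpq hp => hp.trans hpq)).2
      exact le_antisymm (hxy.mp le_rfl) (hyx.mpr le_rfl)
  · rintro ⟨h1, h2⟩ F hFU hFuniv hFint hFimp V hV
    have hmem : V ∈ {W : Set X | W ∈ F ∧ IsUpperSet W} :=
      backward' (G := {W : Set X | W ∈ F ∧ IsUpperSet W}) hU h1 h2 (fun W hW => hW.2) (fun i => ⟨hFU i, hU i⟩)
        ⟨hFuniv, isUpperSet_univ⟩
        (fun P hP Q hQ => ⟨hFint P hP.1 Q hQ.1, hP.2.inter hQ.2⟩)
        (fun P hP Q hQ => ⟨hFimp P hP.1 Q hQ.1, isUpperSet_imp'⟩) V hV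
    exact hmem.1
end

section
/- Let A be an implicative semilattice with a nucleus j, and suppose A is generated by a single element g, i.e. the smallest subset of A containing g and ⊤ and closed under ⊓, ⇨, and j is all of A. Then every element of A is equal to one of the following eight elements: g, j g, j g ⇨ g, j (j g ⇨ g), (j g ⇨ g) ⇨ g, ((j g ⇨ g) ⇨ g) ⇨ j g, (((j g ⇨ g) ⇨ g) ⇨ j g) ⇨ j (j g ⇨ g), and ⊤. In particular A has at most 8 elements. (The free cyclic nuclear implicative semilattice has exactly these 8 elements.) -/
/-- The free cyclic nuclear implicative semilattice has 8 elements: if an implicative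
semilattice with nucleus `j` is generated by a single element `g`, then every element is
one of the listed eight elements; in particular the algebra has at most 8 elements. -/
theorem free_cyclic_nis_has_eight_elements {A : Type*} [SemilatticeInf A] [OrderTop A]
    (himp : A → A → A) (hres : ∀ a b c : A, a ≤ himp b c ↔ a ⊓ b ≤ c)
    (j : A → A) (hj_le : ∀ a : A, a ≤ j a) (hj_idem : ∀ a : A, j (j a) = j a)
    (hj_inf : ∀ a b : A, j (a ⊓ b) = j a ⊓ j b)
    (g : A)
    (hgen : ∀ T : Set A, g ∈ T → (⊤ : A) ∈ T →
      (∀ x ∈ T, ∀ y ∈ T, x ⊓ y ∈ T) → (∀ x ∈ T, ∀ y ∈ T, himp x y ∈ T) →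
      (∀ x ∈ T, j x ∈ T) → ∀ a : A, a ∈ T) :
    (∀ a : A,
      a = g ∨
      a = j g ∨
      a = himp (j g) g ∨
      a = j (himp (j g) g) ∨
      a = himp (himp (j g) g) g ∨
      a = himp (himp (himp (j g) g) g) (j g) ∨
      a = himp (himp (himp (himp (j g) g) g) (j g)) (j (himp (j g) g)) ∨
      a = ⊤) ∧
    Nat.card A ≤ 8 := by
  have lh : ∀ {x y z : A}, x ⊓ y ≤ z → x ≤ himp y z := fun h => (hres _ _ _).2 h
  have mp : ∀ x y : A, himp x y ⊓ x ≤ y := fun x y => (hres _ _ _).1 le_rfl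
  have wk : ∀ x y : A, y ≤ himp x y := fun x y => lh inf_le_left
  have himp_of_le : ∀ {x y : A}, x ≤ y → himp x y = ⊤ := fun h =>
    le_antisymm le_top (lh (inf_le_right.trans h))
  have htop : ∀ y : A, himp ⊤ y = y := fun y =>
    le_antisymm (by simpa using mp ⊤ y) (wk ⊤ y)
  have jm : ∀ {x y : A}, x ≤ y → j x ≤ j y := by
    intro x y hxy
    have h : j x = j x ⊓ j y := by rw [← hj_inf, inf_eq_left.mpr hxy]
    rw [h]; exact inf_le_right
  have hkey2 : ∀ {x y u v : A}, u ≤ x → y ⊓ u ≤ v → himp x y ≤ himp u v :=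
    fun h1 h2 => lh (le_trans (le_inf (le_trans (inf_le_inf_left _ h1) (mp _ _))
      inf_le_right) h2)
  set b := j g with hb
  set c := himp b g with hc
  set d := j c with hd
  set e := himp c g with he
  set f := himp e b with hf
  set t := himp f d with ht
  -- order facts
  have Lab : g ≤ b := hj_le g
  have Lac : g ≤ c := (lh inf_le_left).trans hc.ge
  have Lcd : c ≤ d := (hj_le c).trans hd.ge
  have Lad : g ≤ d := Lac.trans Lcd
  have Lae : g ≤ e := (lh inf_le_left).trans he.ge
  have Mbc : b ⊓ c = g := by
    refine le_antisymm ?_ (le_inf Lab Lac)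
    rw [hc, inf_comm]; exact mp b g
  have Mce : c ⊓ e = g := by
    refine le_antisymm ?_ (le_inf Lac Lae)
    rw [he, inf_comm]; exact mp c g
  have Lbe : b ≤ e := (lh Mbc.le).trans he.ge
  have Lbd : b ≤ d := hb.le.trans ((jm Lac).trans hd.ge)
  have Mde : d ⊓ e = b := by
    refine le_antisymm ?_ (le_inf Lbd Lbe)
    calc d ⊓ e = j c ⊓ e := by rw [hd]
      _ ≤ j c ⊓ j e := inf_le_inf_left _ (hj_le e)
      _ = j (c ⊓ e) := (hj_inf c e).symm
      _ = j g := by rw [Mce]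
      _ = b := hb.symm
  have Lbf : b ≤ f := (lh inf_le_left).trans hf.ge
  have Mef : e ⊓ f = b := by
    refine le_antisymm ?_ (le_inf Lbe Lbf)
    rw [hf, inf_comm]; exact mp e b
  have Ldf : d ≤ f := (lh Mde.le).trans hf.ge
  have Lcf : c ≤ f := Lcd.trans Ldf
  have Laf : g ≤ f := Lab.trans Lbf
  have Ldt : d ≤ t := (lh inf_le_left).trans ht.ge
  have Mft : f ⊓ t = d := by
    refine le_antisymm ?_ (le_inf Ldf Ldt)
    rw [ht, inf_comm]; exact mp f d
  have Lbt : b ≤ t := Lbd.trans Ldt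
  have Lct : c ≤ t := Lcd.trans Ldt
  have Let : e ≤ t := (lh (Mef.le.trans Lbd)).trans ht.ge
  have Lat : g ≤ t := Lab.trans Lbt
  -- nucleus values
  have Ejb : j b = b := by rw [hb]; exact hj_idem g
  have Ejd : j d = d := by rw [hd]; exact hj_idem c
  have Eje : j e = e := by
    refine le_antisymm ?_ (hj_le e)
    have h2 : j e ⊓ c ≤ b := by
      calc j e ⊓ c ≤ j e ⊓ j c := inf_le_inf_left _ (hj_le c)
        _ = j (e ⊓ c) := (hj_inf e c).symm
        _ ≤ j g := jm ((inf_comm e c).trans_le Mce.le)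
        _ = b := hb.symm
    exact (lh (le_trans (le_inf h2 inf_le_right) Mbc.le)).trans he.ge
  have Ejf : j f = f := by
    refine le_antisymm ?_ (hj_le f)
    have h2 : j f ⊓ e ≤ b := by
      calc j f ⊓ e ≤ j f ⊓ j e := inf_le_inf_left _ (hj_le e)
        _ = j (f ⊓ e) := (hj_inf f e).symm
        _ ≤ j b := jm ((inf_comm f e).trans_le Mef.le)
        _ = b := Ejb
    exact (lh h2).trans hf.ge
  have Ejt : j t = t := by
    refine le_antisymm ?_ (hj_le t)
    have h2 : j t ⊓ f ≤ d := by
      calc j t ⊓ f ≤ j t ⊓ j f := inf_le_inf_left _ (hj_le f)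
        _ = j (t ⊓ f) := (hj_inf t f).symm
        _ ≤ j d := jm ((inf_comm t f).trans_le Mft.le)
        _ = d := Ejd
    exact (lh h2).trans ht.ge
  have Ejtop : j (⊤ : A) = ⊤ := le_antisymm le_top (hj_le ⊤)
  -- himp values
  have Ebc : himp b c = c :=
    le_antisymm ((hkey2 le_rfl ((inf_comm c b).trans_le Mbc.le)).trans hc.ge) (wk b c)
  have Ecb : himp c b = e :=
    le_antisymm ((hkey2 le_rfl Mbc.le).trans he.ge)
      (lh ((inf_comm e c).trans_le (Mce.le.trans Lab)))
  have Ece : himp c e = e :=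
    le_antisymm ((hkey2 le_rfl ((inf_comm e c).trans_le Mce.le)).trans he.ge) (wk c e)
  have Eda : himp d g = g :=
    le_antisymm ((le_inf ((hkey2 Lbd inf_le_left).trans hc.ge)
      ((hkey2 Lcd inf_le_left).trans he.ge)).trans Mce.le) (wk d g)
  have Edb : himp d b = e :=
    le_antisymm ((hkey2 Lcd Mbc.le).trans he.ge)
      (lh ((inf_comm e d).trans_le Mde.le))
  have Edc : himp d c = c :=
    le_antisymm ((hkey2 Lbd ((inf_comm c b).trans_le Mbc.le)).trans hc.ge) (wk d c)
  have Ede : himp d e = e :=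
    le_antisymm ((hkey2 Lcd ((inf_comm e c).trans_le Mce.le)).trans he.ge) (wk d e)
  have Eea : himp e g = c :=
    le_antisymm ((hkey2 Lbe inf_le_left).trans hc.ge)
      (lh Mce.le)
  have Eec : himp e c = c :=
    le_antisymm ((hkey2 Lbe ((inf_comm c b).trans_le Mbc.le)).trans hc.ge) (wk e c)
  have Eed : himp e d = f :=
    le_antisymm ((hkey2 le_rfl Mde.le).trans hf.ge)
      (lh ((inf_comm f e).trans_le (Mef.le.trans Lbd)))
  have Eef : himp e f = f :=
    le_antisymm ((hkey2 le_rfl ((inf_comm f e).trans_le Mef.le)).trans hf.ge) (wk e f)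
  have Efa : himp f g = g :=
    le_antisymm ((le_inf ((hkey2 Lbf inf_le_left).trans hc.ge)
      ((hkey2 Lcf inf_le_left).trans he.ge)).trans Mce.le) (wk f g)
  have Efb : himp f b = e :=
    le_antisymm ((hkey2 Lcf Mbc.le).trans he.ge) (lh Mef.le)
  have Efc : himp f c = c :=
    le_antisymm ((hkey2 Lbf ((inf_comm c b).trans_le Mbc.le)).trans hc.ge) (wk f c)
  have Efe : himp f e = e :=
    le_antisymm ((hkey2 Lcf ((inf_comm e c).trans_le Mce.le)).trans he.ge) (wk f e)
  have Eft : himp f t = t :=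
    le_antisymm ((hkey2 le_rfl ((inf_comm t f).trans_le Mft.le)).trans ht.ge) (wk f t)
  have Eta : himp t g = g :=
    le_antisymm ((le_inf ((hkey2 Lbt inf_le_left).trans hc.ge)
      ((hkey2 Lct inf_le_left).trans he.ge)).trans Mce.le) (wk t g)
  have Etb : himp t b = b :=
    le_antisymm ((le_inf ((hkey2 Lct Mbc.le).trans he.ge)
      ((hkey2 Let inf_le_left).trans hf.ge)).trans Mef.le) (wk t b)
  have Etc' : himp t c = c :=
    le_antisymm ((hkey2 Lbt ((inf_comm c b).trans_le Mbc.le)).trans hc.ge) (wk t c)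
  have Etd : himp t d = f :=
    le_antisymm ((hkey2 Let Mde.le).trans hf.ge) (lh Mft.le)
  have Ete : himp t e = e :=
    le_antisymm ((hkey2 Lct ((inf_comm e c).trans_le Mce.le)).trans he.ge) (wk t e)
  have Etf : himp t f = f :=
    le_antisymm ((hkey2 Let ((inf_comm f e).trans_le Mef.le)).trans hf.ge) (wk t f)
  set T : Set A :=
    {x | x = g ∨ x = b ∨ x = c ∨ x = d ∨ x = e ∨ x = f ∨ x = t ∨ x = ⊤} with hT
  have hgT : g ∈ T := Or.inl rfl
  have htopT : (⊤ : A) ∈ T := Or.inr (Or.inr (Or.inr (Or.inr (Or.inr (Or.inr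
    (Or.inr rfl))))))
  have hinfT : ∀ x ∈ T, ∀ y ∈ T, x ⊓ y ∈ T := by
    intro x hx y hy
    rcases hx with rfl|rfl|rfl|rfl|rfl|rfl|rfl|rfl <;>
      rcases hy with rfl|rfl|rfl|rfl|rfl|rfl|rfl|rfl
    · exact Or.inl (inf_eq_left.mpr le_rfl)
    · exact Or.inl (inf_eq_left.mpr Lab)
    · exact Or.inl (inf_eq_left.mpr Lac)
    · exact Or.inl (inf_eq_left.mpr Lad)
    · exact Or.inl (inf_eq_left.mpr Lae)
    · exact Or.inl (inf_eq_left.mpr Laf)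
    · exact Or.inl (inf_eq_left.mpr Lat)
    · exact Or.inl (inf_eq_left.mpr le_top)
    · exact Or.inl (inf_eq_right.mpr Lab)
    · exact Or.inr (Or.inl (inf_eq_left.mpr le_rfl))
    · exact Or.inl (Mbc)
    · exact Or.inr (Or.inl (inf_eq_left.mpr Lbd))
    · exact Or.inr (Or.inl (inf_eq_left.mpr Lbe))
    · exact Or.inr (Or.inl (inf_eq_left.mpr Lbf))
    · exact Or.inr (Or.inl (inf_eq_left.mpr Lbt))
    · exact Or.inr (Or.inl (inf_eq_left.mpr le_top))
    · exact Or.inl (inf_eq_right.mpr Lac)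
    · exact Or.inl ((inf_comm c b).trans Mbc)
    · exact Or.inr (Or.inr (Or.inl (inf_eq_left.mpr le_rfl)))
    · exact Or.inr (Or.inr (Or.inl (inf_eq_left.mpr Lcd)))
    · exact Or.inl (Mce)
    · exact Or.inr (Or.inr (Or.inl (inf_eq_left.mpr Lcf)))
    · exact Or.inr (Or.inr (Or.inl (inf_eq_left.mpr Lct)))
    · exact Or.inr (Or.inr (Or.inl (inf_eq_left.mpr le_top)))
    · exact Or.inl (inf_eq_right.mpr Lad)
    · exact Or.inr (Or.inl (inf_eq_right.mpr Lbd))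
    · exact Or.inr (Or.inr (Or.inl (inf_eq_right.mpr Lcd)))
    · exact Or.inr (Or.inr (Or.inr (Or.inl (inf_eq_left.mpr le_rfl))))
    · exact Or.inr (Or.inl (Mde))
    · exact Or.inr (Or.inr (Or.inr (Or.inl (inf_eq_left.mpr Ldf))))
    · exact Or.inr (Or.inr (Or.inr (Or.inl (inf_eq_left.mpr Ldt))))
    · exact Or.inr (Or.inr (Or.inr (Or.inl (inf_eq_left.mpr le_top))))
    · exact Or.inl (inf_eq_right.mpr Lae)
    · exact Or.inr (Or.inl (inf_eq_right.mpr Lbe))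
    · exact Or.inl ((inf_comm e c).trans Mce)
    · exact Or.inr (Or.inl ((inf_comm e d).trans Mde))
    · exact Or.inr (Or.inr (Or.inr (Or.inr (Or.inl (inf_eq_left.mpr le_rfl)))))
    · exact Or.inr (Or.inl (Mef))
    · exact Or.inr (Or.inr (Or.inr (Or.inr (Or.inl (inf_eq_left.mpr Let)))))
    · exact Or.inr (Or.inr (Or.inr (Or.inr (Or.inl (inf_eq_left.mpr le_top)))))
    · exact Or.inl (inf_eq_right.mpr Laf)
    · exact Or.inr (Or.inl (inf_eq_right.mpr Lbf))
    · exact Or.inr (Or.inr (Or.inl (inf_eq_right.mpr Lcf)))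
    · exact Or.inr (Or.inr (Or.inr (Or.inl (inf_eq_right.mpr Ldf))))
    · exact Or.inr (Or.inl ((inf_comm f e).trans Mef))
    · exact Or.inr (Or.inr (Or.inr (Or.inr (Or.inr (Or.inl (inf_eq_left.mpr le_rfl))))))
    · exact Or.inr (Or.inr (Or.inr (Or.inl (Mft))))
    · exact Or.inr (Or.inr (Or.inr (Or.inr (Or.inr (Or.inl (inf_eq_left.mpr le_top))))))
    · exact Or.inl (inf_eq_right.mpr Lat)
    · exact Or.inr (Or.inl (inf_eq_right.mpr Lbt))
    · exact Or.inr (Or.inr (Or.inl (inf_eq_right.mpr Lct)))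
    · exact Or.inr (Or.inr (Or.inr (Or.inl (inf_eq_right.mpr Ldt))))
    · exact Or.inr (Or.inr (Or.inr (Or.inr (Or.inl (inf_eq_right.mpr Let)))))
    · exact Or.inr (Or.inr (Or.inr (Or.inl ((inf_comm t f).trans Mft))))
    · exact Or.inr (Or.inr (Or.inr (Or.inr (Or.inr (Or.inr (Or.inl (inf_eq_left.mpr le_rfl)))))))
    · exact Or.inr (Or.inr (Or.inr (Or.inr (Or.inr (Or.inr (Or.inl (inf_eq_left.mpr le_top)))))))
    · exact Or.inl (inf_eq_right.mpr le_top)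
    · exact Or.inr (Or.inl (inf_eq_right.mpr le_top))
    · exact Or.inr (Or.inr (Or.inl (inf_eq_right.mpr le_top)))
    · exact Or.inr (Or.inr (Or.inr (Or.inl (inf_eq_right.mpr le_top))))
    · exact Or.inr (Or.inr (Or.inr (Or.inr (Or.inl (inf_eq_right.mpr le_top)))))
    · exact Or.inr (Or.inr (Or.inr (Or.inr (Or.inr (Or.inl (inf_eq_right.mpr le_top))))))
    · exact Or.inr (Or.inr (Or.inr (Or.inr (Or.inr (Or.inr (Or.inl (inf_eq_right.mpr le_top)))))))
    · exact Or.inr (Or.inr (Or.inr (Or.inr (Or.inr (Or.inr (Or.inr ((inf_eq_left.mpr le_rfl))))))))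
  have hhimpT : ∀ x ∈ T, ∀ y ∈ T, himp x y ∈ T := by
    intro x hx y hy
    rcases hx with rfl|rfl|rfl|rfl|rfl|rfl|rfl|rfl <;>
      rcases hy with rfl|rfl|rfl|rfl|rfl|rfl|rfl|rfl
    · exact Or.inr (Or.inr (Or.inr (Or.inr (Or.inr (Or.inr (Or.inr ((himp_of_le le_rfl))))))))
    · exact Or.inr (Or.inr (Or.inr (Or.inr (Or.inr (Or.inr (Or.inr ((himp_of_le Lab))))))))
    · exact Or.inr (Or.inr (Or.inr (Or.inr (Or.inr (Or.inr (Or.inr ((himp_of_le Lac))))))))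
    · exact Or.inr (Or.inr (Or.inr (Or.inr (Or.inr (Or.inr (Or.inr ((himp_of_le Lad))))))))
    · exact Or.inr (Or.inr (Or.inr (Or.inr (Or.inr (Or.inr (Or.inr ((himp_of_le Lae))))))))
    · exact Or.inr (Or.inr (Or.inr (Or.inr (Or.inr (Or.inr (Or.inr ((himp_of_le Laf))))))))
    · exact Or.inr (Or.inr (Or.inr (Or.inr (Or.inr (Or.inr (Or.inr ((himp_of_le Lat))))))))
    · exact Or.inr (Or.inr (Or.inr (Or.inr (Or.inr (Or.inr (Or.inr ((himp_of_le le_top))))))))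
    · exact Or.inr (Or.inr (Or.inl (hc.symm)))
    · exact Or.inr (Or.inr (Or.inr (Or.inr (Or.inr (Or.inr (Or.inr ((himp_of_le le_rfl))))))))
    · exact Or.inr (Or.inr (Or.inl (Ebc)))
    · exact Or.inr (Or.inr (Or.inr (Or.inr (Or.inr (Or.inr (Or.inr ((himp_of_le Lbd))))))))
    · exact Or.inr (Or.inr (Or.inr (Or.inr (Or.inr (Or.inr (Or.inr ((himp_of_le Lbe))))))))
    · exact Or.inr (Or.inr (Or.inr (Or.inr (Or.inr (Or.inr (Or.inr ((himp_of_le Lbf))))))))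
    · exact Or.inr (Or.inr (Or.inr (Or.inr (Or.inr (Or.inr (Or.inr ((himp_of_le Lbt))))))))
    · exact Or.inr (Or.inr (Or.inr (Or.inr (Or.inr (Or.inr (Or.inr ((himp_of_le le_top))))))))
    · exact Or.inr (Or.inr (Or.inr (Or.inr (Or.inl (he.symm)))))
    · exact Or.inr (Or.inr (Or.inr (Or.inr (Or.inl (Ecb)))))
    · exact Or.inr (Or.inr (Or.inr (Or.inr (Or.inr (Or.inr (Or.inr ((himp_of_le le_rfl))))))))
    · exact Or.inr (Or.inr (Or.inr (Or.inr (Or.inr (Or.inr (Or.inr ((himp_of_le Lcd))))))))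
    · exact Or.inr (Or.inr (Or.inr (Or.inr (Or.inl (Ece)))))
    · exact Or.inr (Or.inr (Or.inr (Or.inr (Or.inr (Or.inr (Or.inr ((himp_of_le Lcf))))))))
    · exact Or.inr (Or.inr (Or.inr (Or.inr (Or.inr (Or.inr (Or.inr ((himp_of_le Lct))))))))
    · exact Or.inr (Or.inr (Or.inr (Or.inr (Or.inr (Or.inr (Or.inr ((himp_of_le le_top))))))))
    · exact Or.inl (Eda)
    · exact Or.inr (Or.inr (Or.inr (Or.inr (Or.inl (Edb)))))
    · exact Or.inr (Or.inr (Or.inl (Edc)))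
    · exact Or.inr (Or.inr (Or.inr (Or.inr (Or.inr (Or.inr (Or.inr ((himp_of_le le_rfl))))))))
    · exact Or.inr (Or.inr (Or.inr (Or.inr (Or.inl (Ede)))))
    · exact Or.inr (Or.inr (Or.inr (Or.inr (Or.inr (Or.inr (Or.inr ((himp_of_le Ldf))))))))
    · exact Or.inr (Or.inr (Or.inr (Or.inr (Or.inr (Or.inr (Or.inr ((himp_of_le Ldt))))))))
    · exact Or.inr (Or.inr (Or.inr (Or.inr (Or.inr (Or.inr (Or.inr ((himp_of_le le_top))))))))
    · exact Or.inr (Or.inr (Or.inl (Eea)))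
    · exact Or.inr (Or.inr (Or.inr (Or.inr (Or.inr (Or.inl (hf.symm))))))
    · exact Or.inr (Or.inr (Or.inl (Eec)))
    · exact Or.inr (Or.inr (Or.inr (Or.inr (Or.inr (Or.inl (Eed))))))
    · exact Or.inr (Or.inr (Or.inr (Or.inr (Or.inr (Or.inr (Or.inr ((himp_of_le le_rfl))))))))
    · exact Or.inr (Or.inr (Or.inr (Or.inr (Or.inr (Or.inl (Eef))))))
    · exact Or.inr (Or.inr (Or.inr (Or.inr (Or.inr (Or.inr (Or.inr ((himp_of_le Let))))))))
    · exact Or.inr (Or.inr (Or.inr (Or.inr (Or.inr (Or.inr (Or.inr ((himp_of_le le_top))))))))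
    · exact Or.inl (Efa)
    · exact Or.inr (Or.inr (Or.inr (Or.inr (Or.inl (Efb)))))
    · exact Or.inr (Or.inr (Or.inl (Efc)))
    · exact Or.inr (Or.inr (Or.inr (Or.inr (Or.inr (Or.inr (Or.inl (ht.symm)))))))
    · exact Or.inr (Or.inr (Or.inr (Or.inr (Or.inl (Efe)))))
    · exact Or.inr (Or.inr (Or.inr (Or.inr (Or.inr (Or.inr (Or.inr ((himp_of_le le_rfl))))))))
    · exact Or.inr (Or.inr (Or.inr (Or.inr (Or.inr (Or.inr (Or.inl (Eft)))))))
    · exact Or.inr (Or.inr (Or.inr (Or.inr (Or.inr (Or.inr (Or.inr ((himp_of_le le_top))))))))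
    · exact Or.inl (Eta)
    · exact Or.inr (Or.inl (Etb))
    · exact Or.inr (Or.inr (Or.inl (Etc')))
    · exact Or.inr (Or.inr (Or.inr (Or.inr (Or.inr (Or.inl (Etd))))))
    · exact Or.inr (Or.inr (Or.inr (Or.inr (Or.inl (Ete)))))
    · exact Or.inr (Or.inr (Or.inr (Or.inr (Or.inr (Or.inl (Etf))))))
    · exact Or.inr (Or.inr (Or.inr (Or.inr (Or.inr (Or.inr (Or.inr ((himp_of_le le_rfl))))))))
    · exact Or.inr (Or.inr (Or.inr (Or.inr (Or.inr (Or.inr (Or.inr ((himp_of_le le_top))))))))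
    · exact Or.inl (htop _)
    · exact Or.inr (Or.inl (htop b))
    · exact Or.inr (Or.inr (Or.inl (htop c)))
    · exact Or.inr (Or.inr (Or.inr (Or.inl (htop d))))
    · exact Or.inr (Or.inr (Or.inr (Or.inr (Or.inl (htop e)))))
    · exact Or.inr (Or.inr (Or.inr (Or.inr (Or.inr (Or.inl (htop f))))))
    · exact Or.inr (Or.inr (Or.inr (Or.inr (Or.inr (Or.inr (Or.inl (htop t)))))))
    · exact Or.inr (Or.inr (Or.inr (Or.inr (Or.inr (Or.inr (Or.inr ((htop ⊤))))))))
  have hjT : ∀ x ∈ T, j x ∈ T := by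
    intro x hx
    rcases hx with rfl|rfl|rfl|rfl|rfl|rfl|rfl|rfl
    · exact Or.inr (Or.inl (hb.symm))
    · exact Or.inr (Or.inl (Ejb))
    · exact Or.inr (Or.inr (Or.inr (Or.inl (hd.symm))))
    · exact Or.inr (Or.inr (Or.inr (Or.inl (Ejd))))
    · exact Or.inr (Or.inr (Or.inr (Or.inr (Or.inl (Eje)))))
    · exact Or.inr (Or.inr (Or.inr (Or.inr (Or.inr (Or.inl (Ejf))))))
    · exact Or.inr (Or.inr (Or.inr (Or.inr (Or.inr (Or.inr (Or.inl (Ejt)))))))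
    · exact Or.inr (Or.inr (Or.inr (Or.inr (Or.inr (Or.inr (Or.inr ((Ejtop))))))))
  have key : ∀ x : A, x ∈ T := hgen T hgT htopT hinfT hhimpT hjT
  refine ⟨fun x => key x, ?_⟩
  have hsurj : Function.Surjective (![g, b, c, d, e, f, t, ⊤] : Fin 8 → A) := by
    intro x
    rcases key x with rfl|rfl|rfl|rfl|rfl|rfl|rfl|rfl
    exacts [⟨0, rfl⟩, ⟨1, rfl⟩, ⟨2, rfl⟩, ⟨3, rfl⟩, ⟨4, rfl⟩, ⟨5, rfl⟩, ⟨6, rfl⟩, ⟨7, rfl⟩]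
  have := Nat.card_le_card_of_surjective _ hsurj
  simpa using this
end

section
/- Let A be a bounded implicative semilattice (with least element ⊥) with a locally dense nucleus j, i.e. j (j ⊥ ⇨ ⊥) = ⊤, and suppose A is generated by the empty set, i.e. the smallest subset of A containing ⊤ and ⊥ and closed under ⊓, ⇨, and j is all of A. Then every element of A equals one of ⊥, j ⊥, j ⊥ ⇨ ⊥, ⊤; in particular A has at most 4 elements. (The free 0-generated locally dense bounded nuclear implicative semilattice has exactly these 4 elements.) -/
/-- The free 0-generated locally dense bounded nuclear implicative semilattice has 4
elements: if a bounded implicative semilattice with a locally dense nucleus `j`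
(`j (j ⊥ ⇨ ⊥) = ⊤`) is generated by the empty set, then every element is one of
`⊥, j ⊥, j ⊥ ⇨ ⊥, ⊤`; in particular the algebra has at most 4 elements. -/
theorem free_zero_generated_locally_dense_nis {A : Type*} [SemilatticeInf A] [OrderTop A]
    [OrderBot A]
    (himp : A → A → A) (hres : ∀ a b c : A, a ≤ himp b c ↔ a ⊓ b ≤ c)
    (j : A → A) (hj_le : ∀ a : A, a ≤ j a) (hj_idem : ∀ a : A, j (j a) = j a)
    (hj_inf : ∀ a b : A, j (a ⊓ b) = j a ⊓ j b)
    (hdense : j (himp (j ⊥) ⊥) = ⊤)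
    (hgen : ∀ T : Set A, (⊤ : A) ∈ T → (⊥ : A) ∈ T →
      (∀ x ∈ T, ∀ y ∈ T, x ⊓ y ∈ T) → (∀ x ∈ T, ∀ y ∈ T, himp x y ∈ T) →
      (∀ x ∈ T, j x ∈ T) → ∀ a : A, a ∈ T) :
    (∀ a : A, a = ⊥ ∨ a = j ⊥ ∨ a = himp (j ⊥) ⊥ ∨ a = ⊤) ∧
    Nat.card A ≤ 4 := by
  set b : A := j ⊥ with hb
  set c : A := himp b ⊥ with hc
  -- basic facts
  have hjtop : j ⊤ = ⊤ := le_antisymm le_top (hj_le ⊤)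
  have hcb : c ⊓ b ≤ ⊥ := (hres c b ⊥).mp le_rfl
  have hbc : b ⊓ c = ⊥ := le_antisymm (inf_comm b c ▸ hcb) bot_le
  have hcb' : c ⊓ b = ⊥ := le_antisymm hcb bot_le
  have himp_bot_left : ∀ y : A, himp ⊥ y = ⊤ := fun y =>
    le_antisymm le_top ((hres ⊤ ⊥ y).mpr (by simp))
  have himp_top_left : ∀ y : A, himp ⊤ y = y := fun y => by
    have h1 : himp ⊤ y ≤ y := by
      have := (hres (himp ⊤ y) ⊤ y).mp le_rfl
      simpa using this
    have h2 : y ≤ himp ⊤ y := (hres y ⊤ y).mpr (by simp)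
    exact le_antisymm h1 h2
  have himp_self : ∀ x : A, himp x x = ⊤ := fun x =>
    le_antisymm le_top ((hres ⊤ x x).mpr inf_le_right)
  have himp_top_right : ∀ x : A, himp x ⊤ = ⊤ := fun x =>
    le_antisymm le_top ((hres ⊤ x ⊤).mpr le_top)
  have hcbot : himp c ⊥ = b := by
    have hd : himp c ⊥ ⊓ c = ⊥ := le_antisymm ((hres (himp c ⊥) c ⊥).mp le_rfl) bot_le
    have hjd : j (himp c ⊥) ⊓ j c = b := by
      rw [← hj_inf, hd]
    rw [hdense, inf_top_eq] at hjd
    have h1 : himp c ⊥ ≤ b := hjd ▸ hj_le (himp c ⊥)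
    have h2 : b ≤ himp c ⊥ := (hres b c ⊥).mpr (le_of_eq (inf_comm b c ▸ hcb'))
    exact le_antisymm h1 h2
  have hbc' : himp b c = c := by
    have h1 : himp b c ≤ c := by
      have h : himp b c ⊓ b ≤ ⊥ := by
        have := (hres (himp b c) b c).mp le_rfl
        calc himp b c ⊓ b ≤ c ⊓ b := le_inf this inf_le_right
          _ ≤ ⊥ := hcb
      exact (hres (himp b c) b ⊥).mpr h
    have h2 : c ≤ himp b c := (hres c b c).mpr (hcb.trans bot_le)
    exact le_antisymm h1 h2
  have hcbB : himp c b = b := by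
    have h1 : himp c b ≤ b := by
      have h : himp c b ⊓ c ≤ ⊥ := by
        have := (hres (himp c b) c b).mp le_rfl
        calc himp c b ⊓ c ≤ b ⊓ c := le_inf this inf_le_right
          _ = ⊥ := hbc
      exact hcbot ▸ (hres (himp c b) c ⊥).mpr h
    have h2 : b ≤ himp c b := (hres b c b).mpr inf_le_left
    exact le_antisymm h1 h2
  set T : Set A := {x | x = ⊥ ∨ x = b ∨ x = c ∨ x = ⊤} with hT
  have htopT : (⊤ : A) ∈ T := Or.inr (Or.inr (Or.inr rfl))
  have hbotT : (⊥ : A) ∈ T := Or.inl rfl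
  have hinfT : ∀ x ∈ T, ∀ y ∈ T, x ⊓ y ∈ T := by
    rintro x (rfl | rfl | rfl | rfl) y (rfl | rfl | rfl | rfl) <;>
      simp [hT, Set.mem_setOf_eq, hbc, hcb', inf_idem]
  have himpT : ∀ x ∈ T, ∀ y ∈ T, himp x y ∈ T := by
    rintro x (rfl | rfl | rfl | rfl) y (rfl | rfl | rfl | rfl) <;>
      simp [hT, Set.mem_setOf_eq, himp_bot_left, himp_top_left, himp_self, himp_top_right,
        hcbot, hbc', hcbB, ← hc]
  have hjT : ∀ x ∈ T, j x ∈ T := by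
    rintro x (rfl | rfl | rfl | rfl) <;>
      simp [hT, Set.mem_setOf_eq, hb, hj_idem, hdense, hjtop]
  have hall : ∀ a : A, a = ⊥ ∨ a = b ∨ a = c ∨ a = ⊤ :=
    hgen T htopT hbotT hinfT himpT hjT
  refine ⟨hall, ?_⟩
  have hsurj : Function.Surjective (fun i : Fin 4 => ([⊥, b, c, ⊤] : List A).get i) := by
    intro a
    rcases hall a with rfl | rfl | rfl | rfl
    · exact ⟨0, rfl⟩
    · exact ⟨1, rfl⟩
    · exact ⟨2, rfl⟩
    · exact ⟨3, rfl⟩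
  have := Nat.card_le_card_of_surjective _ hsurj
  simpa using this
end
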